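/- arXiv:1410.2961 — 10 statements merged into one kernel-verified Lean document; each statement's English description precedes it below -/
import Mathlib

section
/- Let 0 < δ₁ < δ₀ < 1 be real numbers. Then there exists a real number μ > 0 such that [log((1−δ₁)/((δ₀+1−δ₁)(1−δ₀)))] · [log(δ₀/((δ₀+1−δ₁)·δ₁))] > μ² > (log(δ₀+1−δ₁))². -/
lemma log_gt_aux (t : ℝ) (ht : 1 < t) : 2*(t-1)/(t+1) < Real.log t := by
  have h0 : (0:ℝ) < t := by linarith
  have key : 0 < (t+1) * Real.log t - 2*(t-1) := by
    set f : ℝ → ℝ := fun x => (x+1) * Real.log x - 2*(x-1) with hf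
    have hmono : StrictMonoOn f (Set.Ici 1) := by
      apply strictMonoOn_of_deriv_pos (convex_Ici 1)
      · apply ContinuousOn.sub
        · exact (continuousOn_id.add continuousOn_const).mul
            (Real.continuousOn_log.mono (by intro x hx; simp [Set.mem_Ici] at hx ⊢; intro h; linarith))
        · exact (continuousOn_const.mul (continuousOn_id.sub continuousOn_const))
      · intro x hx
        rw [interior_Ici, Set.mem_Ioi] at hx
        have hx0 : (0:ℝ) < x := by linarith
        have hd : HasDerivAt f (1 * Real.log x + (x+1) * x⁻¹ - 2*1) x := by
          exact (((hasDerivAt_id x).add_const 1).mul (Real.hasDerivAt_log (ne_of_gt hx0))).sub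
            (((hasDerivAt_id x).sub_const 1).const_mul 2)
        rw [hd.deriv]
        have hlog : 1 - 1/x < Real.log x := by
          have := Real.log_lt_sub_one_of_pos (x := 1/x) (by positivity) (by
            intro h; rw [div_eq_one_iff_eq (ne_of_gt hx0)] at h; linarith)
          rw [Real.log_div one_ne_zero (ne_of_gt hx0), Real.log_one] at this
          linarith
        have hxx : (x+1) * x⁻¹ = 1 + 1/x := by field_simp
        rw [hxx]; linarith
    have h1mem : (1:ℝ) ∈ Set.Ici (1:ℝ) := Set.self_mem_Ici
    have := hmono h1mem (Set.mem_Ici.mpr ht.le) ht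
    simpa [hf] using this
  have ht1 : (0:ℝ) < t + 1 := by linarith
  rw [div_lt_iff₀ ht1]
  linarith

/-- Lemma 1 (key inequality): for `0 < δ₁ < δ₀ < 1` there exists `μ > 0` with
`log((1−δ₁)/((δ₀+1−δ₁)(1−δ₀))) · log(δ₀/((δ₀+1−δ₁)·δ₁)) > μ² > (log(δ₀+1−δ₁))²`. -/
theorem key_inequality (δ₀ δ₁ : ℝ) (h1 : 0 < δ₁) (h2 : δ₁ < δ₀) (h3 : δ₀ < 1) :
    ∃ μ : ℝ, 0 < μ ∧
      μ ^ 2 <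
        Real.log ((1 - δ₁) / ((δ₀ + 1 - δ₁) * (1 - δ₀))) *
          Real.log (δ₀ / ((δ₀ + 1 - δ₁) * δ₁)) ∧
      (Real.log (δ₀ + 1 - δ₁)) ^ 2 < μ ^ 2 := by
  have hx : 0 < δ₀ - δ₁ := by linarith
  have hd0 : (0:ℝ) < δ₀ := by linarith
  have h1d0 : (0:ℝ) < 1 - δ₀ := by linarith
  have h1d1 : (0:ℝ) < 1 - δ₁ := by linarith
  have hs : (0:ℝ) < δ₀ + 1 - δ₁ := by linarith
  set u : ℝ := Real.log ((1 - δ₁) / (1 - δ₀)) with hu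
  set v : ℝ := Real.log (δ₀ / δ₁) with hv
  set L : ℝ := Real.log (δ₀ + 1 - δ₁) with hL
  -- bounds
  have hL0 : 0 < L := Real.log_pos (by linarith)
  have hLx : L < δ₀ - δ₁ := by
    have := Real.log_lt_sub_one_of_pos hs (by intro h; linarith)
    linarith
  have hub : 2 * (δ₀ - δ₁) / (2 - δ₀ - δ₁) < u := by
    have ht : (1:ℝ) < (1 - δ₁) / (1 - δ₀) := by
      rw [lt_div_iff₀ h1d0]; linarith
    have := log_gt_aux _ ht
    have heq : 2 * ((1 - δ₁) / (1 - δ₀) - 1) / ((1 - δ₁) / (1 - δ₀) + 1)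
        = 2 * (δ₀ - δ₁) / (2 - δ₀ - δ₁) := by
      have hne : (2:ℝ) - δ₀ - δ₁ ≠ 0 := by linarith
      field_simp
      try ring
    rw [heq] at this
    exact this
  have hvb : 2 * (δ₀ - δ₁) / (δ₀ + δ₁) < v := by
    have ht : (1:ℝ) < δ₀ / δ₁ := by rw [lt_div_iff₀ h1]; linarith
    have := log_gt_aux _ ht
    have heq : 2 * (δ₀ / δ₁ - 1) / (δ₀ / δ₁ + 1) = 2 * (δ₀ - δ₁) / (δ₀ + δ₁) := by
      have hne : (0:ℝ) < δ₀ + δ₁ := by linarith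
      field_simp
      try ring
    rw [heq] at this
    exact this
  have hu0 : 0 < u := lt_trans (div_pos (by linarith) (by linarith)) hub
  have hv0 : 0 < v := lt_trans (div_pos (by linarith) (by linarith)) hvb
  -- key: L * (u + v) < u * v
  have hkey : L * (u + v) < u * v := by
    have hxu : (δ₀ - δ₁) / u < (2 - δ₀ - δ₁) / 2 := by
      rw [div_lt_div_iff₀ hu0 (by norm_num)]
      have h2' : 0 < 2 - δ₀ - δ₁ := by linarith
      calc (δ₀ - δ₁) * 2 = (2 * (δ₀ - δ₁) / (2 - δ₀ - δ₁)) * (2 - δ₀ - δ₁) := by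
            field_simp
        _ < u * (2 - δ₀ - δ₁) := by
            exact mul_lt_mul_of_pos_right hub h2'
        _ = (2 - δ₀ - δ₁) * u := by ring
    have hxv : (δ₀ - δ₁) / v < (δ₀ + δ₁) / 2 := by
      rw [div_lt_div_iff₀ hv0 (by norm_num)]
      have h2' : 0 < δ₀ + δ₁ := by linarith
      calc (δ₀ - δ₁) * 2 = (2 * (δ₀ - δ₁) / (δ₀ + δ₁)) * (δ₀ + δ₁) := by
            field_simp
        _ < v * (δ₀ + δ₁) := mul_lt_mul_of_pos_right hvb h2'
        _ = (δ₀ + δ₁) * v := by ring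
    -- so (δ₀-δ₁)/u + (δ₀-δ₁)/v < 1, hence (δ₀-δ₁)*(u+v) < u*v
    have hsum : (δ₀ - δ₁) / u + (δ₀ - δ₁) / v < 1 := by linarith
    have hx_uv : (δ₀ - δ₁) * (u + v) < u * v := by
      have h' : ((δ₀ - δ₁) / u + (δ₀ - δ₁) / v) * (u * v) < 1 * (u * v) :=
        mul_lt_mul_of_pos_right hsum (mul_pos hu0 hv0)
      have heq : ((δ₀ - δ₁) / u + (δ₀ - δ₁) / v) * (u * v) = (δ₀ - δ₁) * (u + v) := by
        field_simp
        ring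
      rw [heq, one_mul] at h'
      exact h'
    have : L * (u + v) < (δ₀ - δ₁) * (u + v) :=
      mul_lt_mul_of_pos_right hLx (by linarith)
    linarith
  -- rewrite the target logs as u - L and v - L
  have hA : Real.log ((1 - δ₁) / ((δ₀ + 1 - δ₁) * (1 - δ₀))) = u - L := by
    rw [hu, hL, Real.log_div (by linarith) (by positivity),
      Real.log_mul (by positivity) (by linarith),
      Real.log_div (by linarith) (by linarith)]
    ring
  have hB : Real.log (δ₀ / ((δ₀ + 1 - δ₁) * δ₁)) = v - L := by
    rw [hv, hL, Real.log_div (by linarith) (by positivity),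
      Real.log_mul (by positivity) (by linarith),
      Real.log_div (by linarith) (by linarith)]
    ring
  have hAB : L ^ 2 < (u - L) * (v - L) := by nlinarith [hkey]
  refine ⟨Real.sqrt ((L ^ 2 + (u - L) * (v - L)) / 2), ?_, ?_, ?_⟩
  · apply Real.sqrt_pos.mpr; nlinarith
  · rw [hA, hB, Real.sq_sqrt (by nlinarith)]; linarith
  · rw [Real.sq_sqrt (by nlinarith)]; linarith
end

section
/- Let 0 < δ₁ < δ₀ < 1 and let μ > 0 satisfy both [log((1−δ₁)/((δ₀+1−δ₁)(1−δ₀)))] · [log(δ₀/((δ₀+1−δ₁)·δ₁))] > μ² and μ² > (log(δ₀+1−δ₁))². Define δ₀' = e^{−μ}·δ₀ and δ₁' = e^{−μ}·δ₁ + (1 − e^{−μ}). Then 0 < δ₀' < δ₁' < 1 and R_{(δ₀',δ₁')}(θ) < R_{(δ₀,δ₁)}(θ) for every θ ∈ [0,1]; in particular (δ₀',δ₁') dominates (δ₀,δ₁). -/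
open scoped ENNReal

private lemma log_ge_aux (t s : ℝ) (ht : 0 ≤ t) (hs : 0 < s) :
    t - s ≤ t * Real.log (t / s) := by
  rcases ht.eq_or_lt with h | h
  · rw [← h]; simp; linarith
  · have h1 : Real.log (s / t) ≤ s / t - 1 := Real.log_le_sub_one_of_pos (div_pos hs h)
    have h2 : Real.log (t / s) = - Real.log (s / t) := by
      rw [← Real.log_inv, inv_div]
    have h3 : 1 - s / t ≤ Real.log (t / s) := by rw [h2]; linarith
    have h4 : t * (1 - s / t) ≤ t * Real.log (t / s) :=
      mul_le_mul_of_nonneg_left h3 h.le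
    have h5 : t * (1 - s / t) = t - s := by field_simp
    linarith

private lemma klr_nonneg (θ d : ℝ) (hθ0 : 0 ≤ θ) (hθ1 : θ ≤ 1) (hd0 : 0 < d) (hd1 : d < 1) :
    0 ≤ θ * Real.log (θ / d) + (1 - θ) * Real.log ((1 - θ) / (1 - d)) := by
  have h1 := log_ge_aux θ d hθ0 hd0
  have h2 := log_ge_aux (1 - θ) (1 - d) (by linarith) (by linarith)
  linarith

private lemma hlp (t s s' : ℝ) (hs : s ≠ 0) (hs' : s' ≠ 0) :
    t * Real.log (t / s) - t * Real.log (t / s') = t * (Real.log s' - Real.log s) := by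
  rcases eq_or_ne t 0 with h | h
  · simp [h]
  · rw [Real.log_div h hs, Real.log_div h hs']; ring

private lemma pq_lemma (p q L μ : ℝ) (hp : 0 < p) (hq : 0 < q) (hL : 0 < L)
    (hh1 : μ ^ 2 < (p - L) * (q - L)) (hh2 : L ^ 2 < μ ^ 2) : L < p ∧ L < q := by
  constructor
  · nlinarith [mul_pos hL hq, mul_pos hL hp]
  · nlinarith [mul_pos hL hq, mul_pos hL hp]

private lemma quad_pos (a b μ θ : ℝ) (ha : 0 < a) (hab : μ ^ 2 < a * b)
    (hθ0 : 0 ≤ θ) :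
    0 < a * (1 - θ) ^ 2 + b * θ ^ 2 - 2 * μ * θ * (1 - θ) := by
  rcases hθ0.eq_or_lt with h0 | h0
  · rw [← h0]; simpa using ha
  · nlinarith [sq_nonneg (a * (1 - θ) - μ * θ), mul_pos (sub_pos.2 hab) (mul_pos h0 h0)]

private lemma key1 (E c δ₀ δ₁ : ℝ) (hδ₀ : 0 < δ₀) (hc0 : 0 < c)
    (hc : c = δ₀ + 1 - δ₁) (hEc : E * c < 1) :
    (1 - δ₁) / c < 1 - E * δ₀ := by
  rw [div_lt_iff₀ hc0]
  nlinarith [mul_pos (sub_pos.2 hEc) hδ₀]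

private lemma key2 (E c δ₀ δ₁ : ℝ) (hδ₁ : δ₁ < 1) (hc0 : 0 < c)
    (hc : c = δ₀ + 1 - δ₁) (hEc : E * c < 1) :
    δ₀ / c < E * δ₁ + (1 - E) := by
  rw [div_lt_iff₀ hc0]
  nlinarith [mul_pos (sub_pos.2 hEc) (show (0:ℝ) < 1 - δ₁ by linarith)]

private lemma sq_lt_lemma (x y : ℝ) (hx : 0 < x) (hy : 0 < y) (h : x ^ 2 < y ^ 2) :
    x < y := by nlinarith

/-- The Kullback–Leibler loss `L(θ,d) = θ·log(θ/d) + (1−θ)·log((1−θ)/(1−d)) ∈ [0,∞]`,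
with the conventions `0 · log(0/c) = 0` and `c · log(c/0) = +∞` for `c > 0`.
(When `θ = 0` or `θ = 1`, the corresponding vanishing term is `0` automatically
since `Real.log 0 = 0` in Lean.) -/
noncomputable def KLoss (θ d : ℝ) : ℝ≥0∞ :=
  if (θ ≠ 0 ∧ d = 0) ∨ (θ ≠ 1 ∧ d = 1) then ⊤
  else ENNReal.ofReal
    (θ * Real.log (θ / d) + (1 - θ) * Real.log ((1 - θ) / (1 - d)))

/-- The risk function `R_δ(θ) = (1−θ)·L(θ,δ₀) + θ·L(θ,δ₁) ∈ [0,∞]`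
of a decision `δ = (δ₀, δ₁)`. -/
noncomputable def risk (δ : ℝ × ℝ) (θ : ℝ) : ℝ≥0∞ :=
  ENNReal.ofReal (1 - θ) * KLoss θ δ.1 + ENNReal.ofReal θ * KLoss θ δ.2

/-- `δ'` dominates `δ`: `R_{δ'} ≤ R_δ` on `[0,1]`, with strict inequality somewhere. -/
def Dominates (δ' δ : ℝ × ℝ) : Prop :=
  (∀ θ ∈ Set.Icc (0 : ℝ) 1, risk δ' θ ≤ risk δ θ) ∧
  (∃ θ ∈ Set.Icc (0 : ℝ) 1, risk δ' θ < risk δ θ)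

private lemma KLoss_eq (θ d : ℝ) (hd0 : 0 < d) (hd1 : d < 1) :
    KLoss θ d = ENNReal.ofReal
      (θ * Real.log (θ / d) + (1 - θ) * Real.log ((1 - θ) / (1 - d))) := by
  rw [KLoss, if_neg]
  rintro (⟨-, h⟩ | ⟨-, h⟩)
  · exact hd0.ne' h
  · exact hd1.ne h

private lemma risk_eq (d0 d1 θ : ℝ) (hθ0 : 0 ≤ θ) (hθ1 : θ ≤ 1)
    (h00 : 0 < d0) (h01 : d0 < 1) (h10 : 0 < d1) (h11 : d1 < 1) :
    risk (d0, d1) θ = ENNReal.ofReal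
      ((1 - θ) * (θ * Real.log (θ / d0) + (1 - θ) * Real.log ((1 - θ) / (1 - d0))) +
        θ * (θ * Real.log (θ / d1) + (1 - θ) * Real.log ((1 - θ) / (1 - d1)))) := by
  rw [risk]
  simp only
  rw [KLoss_eq θ d0 h00 h01, KLoss_eq θ d1 h10 h11,
    ← ENNReal.ofReal_mul (by linarith : (0:ℝ) ≤ 1 - θ), ← ENNReal.ofReal_mul hθ0,
    ← ENNReal.ofReal_add (mul_nonneg (by linarith) (klr_nonneg θ d0 hθ0 hθ1 h00 h01))
      (mul_nonneg hθ0 (klr_nonneg θ d1 hθ0 hθ1 h10 h11))]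

set_option maxHeartbeats 1600000

/-- If `0 < δ₁ < δ₀ < 1` and `μ > 0` satisfies the key inequality, then the decision
`δ' = (e^{−μ}δ₀, e^{−μ}δ₁ + (1 − e^{−μ}))` lies in `0 < δ₀' < δ₁' < 1`, has strictly
smaller risk at every `θ ∈ [0,1]`, and in particular dominates `(δ₀, δ₁)`. -/
theorem exp_shift_dominates (δ₀ δ₁ μ : ℝ)
    (h1 : 0 < δ₁) (h2 : δ₁ < δ₀) (h3 : δ₀ < 1) (hμ : 0 < μ)
    (hineq1 : μ ^ 2 <
      Real.log ((1 - δ₁) / ((δ₀ + 1 - δ₁) * (1 - δ₀))) *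
        Real.log (δ₀ / ((δ₀ + 1 - δ₁) * δ₁)))
    (hineq2 : (Real.log (δ₀ + 1 - δ₁)) ^ 2 < μ ^ 2) :
    (0 < Real.exp (-μ) * δ₀ ∧
      Real.exp (-μ) * δ₀ < Real.exp (-μ) * δ₁ + (1 - Real.exp (-μ)) ∧
      Real.exp (-μ) * δ₁ + (1 - Real.exp (-μ)) < 1) ∧
    (∀ θ ∈ Set.Icc (0 : ℝ) 1,
      risk (Real.exp (-μ) * δ₀, Real.exp (-μ) * δ₁ + (1 - Real.exp (-μ))) θ <
        risk (δ₀, δ₁) θ) ∧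
    Dominates (Real.exp (-μ) * δ₀, Real.exp (-μ) * δ₁ + (1 - Real.exp (-μ))) (δ₀, δ₁) := by
  have hδ₀ : 0 < δ₀ := lt_trans h1 h2
  have hδ₁1 : δ₁ < 1 := lt_trans h2 h3
  set E := Real.exp (-μ) with hEdef
  clear_value E
  have hE0 : 0 < E := hEdef ▸ Real.exp_pos _
  have hE1 : E < 1 := by
    rw [hEdef, ← Real.exp_zero]
    exact Real.exp_lt_exp.mpr (by linarith)
  set c : ℝ := δ₀ + 1 - δ₁ with hcdef
  clear_value c
  have hc1 : 1 < c := by rw [hcdef]; linarith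
  have hc0 : 0 < c := by linarith
  have hLc : 0 < Real.log c := Real.log_pos hc1
  have hμc : Real.log c < μ := sq_lt_lemma _ _ hLc hμ hineq2
  have hEc : E * c < 1 := by
    have hlt : E < c⁻¹ := by
      have h' : Real.exp (-μ) < Real.exp (-(Real.log c)) :=
        Real.exp_lt_exp.mpr (by linarith)
      rw [Real.exp_neg (Real.log c), Real.exp_log hc0] at h'
      rw [hEdef]; exact h'
    have h'' := mul_lt_mul_of_pos_right hlt hc0
    rwa [inv_mul_cancel₀ (ne_of_gt hc0)] at h''
  -- bounds for the new decision
  set d0' : ℝ := E * δ₀ with hd0def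
  set d1' : ℝ := E * δ₁ + (1 - E) with hd1def
  clear_value d0' d1'
  have hd0'0 : 0 < d0' := by rw [hd0def]; exact mul_pos hE0 hδ₀
  have hd0'lt : d0' < d1' := by
    rw [hd0def, hd1def]
    have : E * c = E * δ₀ + E - E * δ₁ := by rw [hcdef]; ring
    linarith
  have hd1'1 : d1' < 1 := by
    have := mul_lt_mul_of_pos_left hδ₁1 hE0
    rw [hd1def]; linarith
  have hd0'1 : d0' < 1 := lt_trans hd0'lt hd1'1
  have hd1'0 : 0 < d1' := lt_trans hd0'0 hd0'lt
  -- logs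
  set p : ℝ := Real.log (1 - δ₁) - Real.log (1 - δ₀) with hpdef
  set q : ℝ := Real.log δ₀ - Real.log δ₁ with hqdef
  clear_value p q
  have hp : 0 < p := by
    rw [hpdef]; exact sub_pos.2 (Real.log_lt_log (by linarith) (by linarith))
  have hq : 0 < q := by rw [hqdef]; exact sub_pos.2 (Real.log_lt_log h1 h2)
  have hA : Real.log ((1 - δ₁) / (c * (1 - δ₀))) = p - Real.log c := by
    rw [Real.log_div (by linarith : (1:ℝ) - δ₁ ≠ 0)
        (mul_ne_zero (ne_of_gt hc0) (by linarith : (1:ℝ) - δ₀ ≠ 0)),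
      Real.log_mul (ne_of_gt hc0) (by linarith : (1:ℝ) - δ₀ ≠ 0), hpdef]
    ring
  have hB : Real.log (δ₀ / (c * δ₁)) = q - Real.log c := by
    rw [Real.log_div (ne_of_gt hδ₀) (mul_ne_zero (ne_of_gt hc0) (ne_of_gt h1)),
      Real.log_mul (ne_of_gt hc0) (ne_of_gt h1), hqdef]
    ring
  rw [hA, hB] at hineq1
  obtain ⟨hApos, hBpos⟩ := pq_lemma p q (Real.log c) μ hp hq hLc hineq1 hineq2
  set a : ℝ := Real.log (1 - d0') - Real.log (1 - δ₀) with hadef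
  set b : ℝ := Real.log d1' - Real.log δ₁ with hbdef
  clear_value a b
  have ha_gt : p - Real.log c < a := by
    have hkey : (1 - δ₁) / c < 1 - d0' := by
      rw [hd0def]; exact key1 E c δ₀ δ₁ hδ₀ hc0 hcdef hEc
    have hlog := Real.log_lt_log (div_pos (by linarith) hc0) hkey
    rw [Real.log_div (by linarith) (ne_of_gt hc0)] at hlog
    rw [hadef]; linarith
  have hb_gt : q - Real.log c < b := by
    have hkey : δ₀ / c < d1' := by
      rw [hd1def]; exact key2 E c δ₀ δ₁ hδ₁1 hc0 hcdef hEc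
    have hlog := Real.log_lt_log (div_pos hδ₀ hc0) hkey
    rw [Real.log_div (ne_of_gt hδ₀) (ne_of_gt hc0)] at hlog
    rw [hbdef]; linarith
  have hapos : 0 < a := by linarith
  have hbpos : 0 < b := by linarith
  have hab : μ ^ 2 < a * b := by
    calc μ ^ 2 < (p - Real.log c) * (q - Real.log c) := hineq1
    _ < a * b := by
        apply mul_lt_mul'' ha_gt hb_gt <;> linarith
  -- log identities
  have hlog0 : Real.log d0' = Real.log δ₀ - μ := by
    rw [hd0def, Real.log_mul (ne_of_gt hE0) (ne_of_gt hδ₀), hEdef, Real.log_exp]; ring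
  have hlog1 : Real.log (1 - d1') = Real.log (1 - δ₁) - μ := by
    have h' : 1 - d1' = E * (1 - δ₁) := by rw [hd1def]; ring
    rw [h', Real.log_mul (ne_of_gt hE0) (by linarith), hEdef, Real.log_exp]; ring
  -- main pointwise strict inequality
  have hmain : ∀ θ ∈ Set.Icc (0:ℝ) 1,
      risk (d0', d1') θ < risk (δ₀, δ₁) θ := by
    rintro θ ⟨hθ0, hθ1⟩
    rw [risk_eq d0' d1' θ hθ0 hθ1 hd0'0 hd0'1 hd1'0 hd1'1,
      risk_eq δ₀ δ₁ θ hθ0 hθ1 hδ₀ h3 h1 hδ₁1]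
    refine (ENNReal.ofReal_lt_ofReal_iff_of_nonneg ?_).mpr ?_
    · exact add_nonneg (mul_nonneg (by linarith) (klr_nonneg θ d0' hθ0 hθ1 hd0'0 hd0'1))
        (mul_nonneg hθ0 (klr_nonneg θ d1' hθ0 hθ1 hd1'0 hd1'1))
    have e1 := hlp θ δ₀ d0' (ne_of_gt hδ₀) (ne_of_gt hd0'0)
    have e2 := hlp (1 - θ) (1 - δ₀) (1 - d0') (by intro h; linarith) (by intro h; linarith)
    have e3 := hlp θ δ₁ d1' (ne_of_gt h1) (ne_of_gt hd1'0)
    have e4 := hlp (1 - θ) (1 - δ₁) (1 - d1') (by intro h; linarith) (by intro h; linarith)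
    have hdiff :
        ((1 - θ) * (θ * Real.log (θ / δ₀) + (1 - θ) * Real.log ((1 - θ) / (1 - δ₀))) +
          θ * (θ * Real.log (θ / δ₁) + (1 - θ) * Real.log ((1 - θ) / (1 - δ₁)))) -
        ((1 - θ) * (θ * Real.log (θ / d0') + (1 - θ) * Real.log ((1 - θ) / (1 - d0'))) +
          θ * (θ * Real.log (θ / d1') + (1 - θ) * Real.log ((1 - θ) / (1 - d1')))) =
        a * (1 - θ) ^ 2 + b * θ ^ 2 - 2 * μ * θ * (1 - θ) := by
      rw [hadef, hbdef]
      linear_combination (1 - θ) * e1 + (1 - θ) * e2 + θ * e3 + θ * e4 +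
        ((1 - θ) * θ) * hlog0 + (θ * (1 - θ)) * hlog1
    have hposQ := quad_pos a b μ θ hapos hab hθ0
    linarith
  exact ⟨⟨hd0'0, hd0'lt, hd1'1⟩, hmain,
    ⟨fun θ hθ => (hmain θ hθ).le,
     ⟨0, ⟨le_refl 0, zero_le_one⟩, hmain 0 ⟨le_refl 0, zero_le_one⟩⟩⟩⟩
end

section
/- Let 0 < δ₁ < δ₀ < 1 and let μ > 0 satisfy [log((1−δ₁)/((δ₀+1−δ₁)(1−δ₀)))] · [log(δ₀/((δ₀+1−δ₁)·δ₁))] > μ². Then log((1 − (1−δ₁)·e^{−μ})/δ₁) · log((1 − δ₀·e^{−μ})/(1−δ₀)) > μ². -/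
/-- Auxiliary: for `0 < d < 1`, `(1+d)·log(1+d) < -log(1-d)`. -/
lemma aux_psi (d : ℝ) (hd0 : 0 < d) (hd1 : d < 1) :
    (1 + d) * Real.log (1 + d) < -Real.log (1 - d) := by
  have h1 : Real.log (1 - d ^ 2) < -(d ^ 2) := by
    have := Real.log_lt_sub_one_of_pos (x := 1 - d ^ 2) (by nlinarith) (by nlinarith)
    linarith
  have h2 : Real.log (1 + d) ≤ d := by
    have := Real.log_le_sub_one_of_pos (x := 1 + d) (by linarith)
    linarith
  have h3 : Real.log (1 - d ^ 2) = Real.log (1 - d) + Real.log (1 + d) := by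
    rw [← Real.log_mul (by nlinarith) (by nlinarith)]
    ring_nf
  have h4 : 0 ≤ Real.log (1 + d) := Real.log_nonneg (by linarith)
  have h5 : d * Real.log (1 + d) ≤ d * d := mul_le_mul_of_nonneg_left h2 hd0.le
  nlinarith

/-- Auxiliary key lemma: for `0 < d < 1` and `d < v ≤ 1`,
`(1+d)·log(1+d) < v·(log v - log(v-d))`. -/
lemma aux_key (d v : ℝ) (hd0 : 0 < d) (hd1 : d < 1) (hv : d < v) (hv1 : v ≤ 1) :
    (1 + d) * Real.log (1 + d) < v * (Real.log v - Real.log (v - d)) := by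
  have hv0 : 0 < v := hd0.trans hv
  have hvd : 0 < v - d := by linarith
  have hdv1 : 0 < 1 - d / v := by
    have : d / v < 1 := (div_lt_one hv0).mpr hv
    linarith
  -- Bernoulli: 1 - d/v ≤ (1-d)^(1/v)
  have hb : 1 - d / v ≤ (1 - d) ^ (1 / v : ℝ) := by
    have hber := one_add_mul_self_le_rpow_one_add (s := -d) (by linarith)
      (p := 1 / v) (by rw [le_div_iff₀ hv0]; linarith)
    have e1 : 1 + 1 / v * (-d) = 1 - d / v := by ring
    have e2 : 1 + -d = 1 - d := by ring
    rw [e1, e2] at hber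
    exact hber
  have hlog : Real.log (1 - d / v) ≤ 1 / v * Real.log (1 - d) := by
    calc Real.log (1 - d / v) ≤ Real.log ((1 - d) ^ (1 / v : ℝ)) :=
          Real.log_le_log hdv1 hb
      _ = 1 / v * Real.log (1 - d) := Real.log_rpow (by linarith) _
  have h5 : Real.log (1 - d / v) = Real.log (v - d) - Real.log v := by
    rw [show (1 - d / v) = (v - d) / v by field_simp, Real.log_div hvd.ne' hv0.ne']
  have h6 := mul_le_mul_of_nonneg_left hlog hv0.le
  rw [h5] at h6
  have h7 : v * (1 / v * Real.log (1 - d)) = Real.log (1 - d) := by field_simp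
  rw [h7] at h6
  have h8 := aux_psi d hd0 hd1
  nlinarith [h6, h8]

/-- Auxiliary chord lemma (weighted AM-GM twice): for `0 < k < 1`, `1 < s`, `0 ≤ θ ≤ 1`,
`θ·(log(1-k/s) - log(1-k)) ≤ log(1 - k·s^(-θ)) - log(1-k)`. -/
lemma aux_chord (k s θ : ℝ) (hk0 : 0 < k) (hk1 : k < 1) (hs : 1 < s)
    (hθ0 : 0 ≤ θ) (hθ1 : θ ≤ 1) :
    θ * (Real.log (1 - k / s) - Real.log (1 - k)) ≤
      Real.log (1 - k * s ^ (-θ : ℝ)) - Real.log (1 - k) := by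
  have hs0 : 0 < s := by linarith
  have hks : 0 < 1 - k / s := by
    have h : k / s < 1 := by
      rw [div_lt_one hs0]; linarith
    linarith
  have h1k : 0 < 1 - k := by linarith
  have hrw : s ^ (-θ : ℝ) = (1 / s) ^ (θ : ℝ) := by
    rw [one_div, Real.inv_rpow hs0.le, ← Real.rpow_neg hs0.le]
  have hg1 : (1 / s) ^ (θ : ℝ) ≤ (1 - θ) * 1 + θ * (1 / s) := by
    have h := Real.geom_mean_le_arith_mean2_weighted (by linarith : (0:ℝ) ≤ 1 - θ)
      hθ0 zero_le_one (by positivity : (0:ℝ) ≤ 1 / s) (by ring)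
    simpa using h
  have step1 : (1 - θ) * (1 - k) + θ * (1 - k / s) ≤ 1 - k * s ^ (-θ : ℝ) := by
    rw [hrw]
    have h := mul_le_mul_of_nonneg_left hg1 hk0.le
    have e : k / s = k * (1 / s) := by ring
    rw [e]
    nlinarith [h]
  have step2 : (1 - k) ^ ((1 - θ) : ℝ) * (1 - k / s) ^ (θ : ℝ) ≤
      (1 - θ) * (1 - k) + θ * (1 - k / s) :=
    Real.geom_mean_le_arith_mean2_weighted (by linarith) hθ0 h1k.le hks.le (by ring)
  have hpos : (0:ℝ) < (1 - k) ^ ((1 - θ) : ℝ) * (1 - k / s) ^ (θ : ℝ) := by positivity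
  have hlog : Real.log ((1 - k) ^ ((1 - θ) : ℝ) * (1 - k / s) ^ (θ : ℝ)) ≤
      Real.log (1 - k * s ^ (-θ : ℝ)) :=
    Real.log_le_log hpos (step2.trans step1)
  rw [Real.log_mul (by positivity) (by positivity), Real.log_rpow h1k, Real.log_rpow hks]
    at hlog
  linarith

set_option maxHeartbeats 1000000 in
/-- If `0 < δ₁ < δ₀ < 1` and `μ > 0` satisfies
`log((1−δ₁)/((δ₀+1−δ₁)(1−δ₀))) · log(δ₀/((δ₀+1−δ₁)·δ₁)) > μ²`, then
`log((1 − (1−δ₁)e^{−μ})/δ₁) · log((1 − δ₀ e^{−μ})/(1−δ₀)) > μ²`. -/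
theorem log_product_bound (δ₀ δ₁ μ : ℝ) (h1 : 0 < δ₁) (h2 : δ₁ < δ₀) (h3 : δ₀ < 1)
    (hμ : 0 < μ)
    (hineq : μ ^ 2 <
      Real.log ((1 - δ₁) / ((δ₀ + 1 - δ₁) * (1 - δ₀))) *
        Real.log (δ₀ / ((δ₀ + 1 - δ₁) * δ₁))) :
    μ ^ 2 <
      Real.log ((1 - (1 - δ₁) * Real.exp (-μ)) / δ₁) *
        Real.log ((1 - δ₀ * Real.exp (-μ)) / (1 - δ₀)) := by
  have hδ₀0 : 0 < δ₀ := h1.trans h2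
  have hv0 : 0 < 1 - δ₁ := by linarith
  have h1δ₀ : 0 < 1 - δ₀ := by linarith
  set s : ℝ := δ₀ + 1 - δ₁ with hsdef
  set c : ℝ := Real.log s with hcdef
  set lA : ℝ := Real.log ((1 - δ₁) / (s * (1 - δ₀))) with hlAdef
  set lB : ℝ := Real.log (δ₀ / (s * δ₁)) with hlBdef
  clear_value lB lA c s
  have hs1 : 1 < s := by rw [hsdef]; linarith
  have hs0 : 0 < s := by linarith
  have hc : 0 < c := by rw [hcdef]; exact Real.log_pos hs1
  have hlA : lA = Real.log (1 - δ₁) - c - Real.log (1 - δ₀) := by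
    rw [hlAdef, Real.log_div hv0.ne' (by positivity), Real.log_mul hs0.ne' h1δ₀.ne']
    rw [hcdef]; ring
  have hlB : lB = Real.log δ₀ - c - Real.log δ₁ := by
    rw [hlBdef, Real.log_div hδ₀0.ne' (by positivity), Real.log_mul hs0.ne' h1.ne']
    rw [hcdef]; ring
  -- key strict bounds coming from `aux_key`
  have hkey1 : s * c < (1 - δ₁) * (Real.log (1 - δ₁) - Real.log (1 - δ₀)) := by
    have h := aux_key (δ₀ - δ₁) (1 - δ₁) (by linarith) (by linarith) (by linarith)
      (by linarith)
    have e1 : (1:ℝ) + (δ₀ - δ₁) = s := by rw [hsdef]; ring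
    have e2 : (1 - δ₁) - (δ₀ - δ₁) = 1 - δ₀ := by ring
    rw [e1, e2] at h
    rw [hcdef]
    exact h
  have hkey2 : s * c < δ₀ * (Real.log δ₀ - Real.log δ₁) := by
    have h := aux_key (δ₀ - δ₁) δ₀ (by linarith) (by linarith) (by linarith) h3.le
    have e1 : (1:ℝ) + (δ₀ - δ₁) = s := by rw [hsdef]; ring
    have e2 : δ₀ - (δ₀ - δ₁) = δ₁ := by ring
    rw [e1, e2] at h
    rw [hcdef]
    exact h
  have hsc : s * c = δ₀ * c + (1 - δ₁) * c := by rw [hsdef]; ring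
  have hA : δ₀ * c < (1 - δ₁) * lA := by
    rw [hlA]
    have e : (1 - δ₁) * (Real.log (1 - δ₁) - c - Real.log (1 - δ₀)) =
        (1 - δ₁) * (Real.log (1 - δ₁) - Real.log (1 - δ₀)) - (1 - δ₁) * c := by ring
    rw [e]
    linarith [hkey1, hsc]
  have hB : (1 - δ₁) * c < δ₀ * lB := by
    rw [hlB]
    have e : δ₀ * (Real.log δ₀ - c - Real.log δ₁) =
        δ₀ * (Real.log δ₀ - Real.log δ₁) - δ₀ * c := by ring
    rw [e]
    linarith [hkey2, hsc]
  have hA0 : 0 < lA := by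
    by_contra hcon
    push_neg at hcon
    linarith [mul_nonpos_of_nonneg_of_nonpos hv0.le hcon, mul_pos hδ₀0 hc, hA]
  have hB0 : 0 < lB := by
    by_contra hcon
    push_neg at hcon
    linarith [mul_nonpos_of_nonneg_of_nonpos hδ₀0.le hcon, mul_pos hv0 hc, hB]
  -- c² < lA·lB
  have hAB : c ^ 2 < lA * lB := by
    have h := mul_lt_mul'' hA hB (by positivity) (by positivity)
    by_contra hcon
    push_neg at hcon
    have h3' := mul_le_mul_of_nonneg_left hcon (show (0:ℝ) ≤ δ₀ * (1 - δ₁) by positivity)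
    linarith [h, h3']
  -- positivity of the goal's log arguments
  have hexp1 : Real.exp (-μ) < 1 := Real.exp_lt_one_iff.mpr (by linarith)
  have hexp0 : 0 < Real.exp (-μ) := Real.exp_pos _
  have hX0 : 0 < 1 - (1 - δ₁) * Real.exp (-μ) := by
    have h := mul_lt_mul_of_pos_left hexp1 hv0
    nlinarith [h]
  have hY0 : 0 < 1 - δ₀ * Real.exp (-μ) := by
    have h := mul_lt_mul_of_pos_left hexp1 hδ₀0
    nlinarith [h]
  rcases le_or_gt c μ with hcase | hcase
  · -- case `c ≤ μ` : use monotonicity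
    have hexp : Real.exp (-μ) * s ≤ 1 := by
      have h : Real.exp (-μ) ≤ 1 / s := by
        rw [show (1 / s : ℝ) = Real.exp (-c) by
          rw [hcdef, Real.exp_neg, Real.exp_log hs0, one_div]]
        exact Real.exp_le_exp.mpr (by linarith)
      have h' := mul_le_mul_of_nonneg_right h hs0.le
      rwa [one_div, inv_mul_cancel₀ hs0.ne'] at h'
    have hL1 : lB ≤ Real.log ((1 - (1 - δ₁) * Real.exp (-μ)) / δ₁) := by
      rw [hlBdef]
      apply Real.log_le_log (by positivity)
      rw [show δ₀ / (s * δ₁) = (δ₀ / s) / δ₁ from (div_div δ₀ s δ₁).symm]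
      have hnum : δ₀ / s ≤ 1 - (1 - δ₁) * Real.exp (-μ) := by
        rw [div_le_iff₀ hs0]
        nlinarith [mul_nonneg hv0.le (by linarith : (0:ℝ) ≤ 1 - Real.exp (-μ) * s)]
      gcongr
    have hL2 : lA ≤ Real.log ((1 - δ₀ * Real.exp (-μ)) / (1 - δ₀)) := by
      rw [hlAdef]
      apply Real.log_le_log (by positivity)
      rw [show (1 - δ₁) / (s * (1 - δ₀)) = ((1 - δ₁) / s) / (1 - δ₀) from (div_div _ s _).symm]
      have hnum : (1 - δ₁) / s ≤ 1 - δ₀ * Real.exp (-μ) := by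
        rw [div_le_iff₀ hs0]
        nlinarith [mul_nonneg hδ₀0.le (by linarith : (0:ℝ) ≤ 1 - Real.exp (-μ) * s)]
      gcongr
    calc μ ^ 2 < lA * lB := hineq
      _ = lB * lA := mul_comm _ _
      _ ≤ _ := mul_le_mul hL1 hL2 hA0.le (hB0.le.trans hL1)
  · -- case `μ < c` : use the chord lemma
    set θ : ℝ := μ / c with hθdef
    clear_value θ
    have hθ0 : 0 < θ := by rw [hθdef]; exact div_pos hμ hc
    have hθ1 : θ < 1 := by rw [hθdef]; exact (div_lt_one hc).mpr hcase
    have hθc : θ * c = μ := by rw [hθdef]; exact div_mul_cancel₀ μ hc.ne'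
    have hexpθ : Real.exp (-μ) = s ^ (-θ : ℝ) := by
      rw [Real.rpow_def_of_pos hs0]
      congr 1
      rw [← hcdef]
      rw [hθdef]
      field_simp [hc.ne']
    have e1 : 1 - (1 - δ₁) / s = δ₀ / s := by
      field_simp [hs0.ne']
      linarith
    have e1' : 1 - δ₀ / s = (1 - δ₁) / s := by
      field_simp [hs0.ne']
      linarith
    have e2 : 1 - (1 - δ₁) = δ₁ := by ring
    have e3 : Real.log (δ₀ / s) = Real.log δ₀ - c := by
      rw [Real.log_div hδ₀0.ne' hs0.ne', hcdef]
    have e3' : Real.log ((1 - δ₁) / s) = Real.log (1 - δ₁) - c := by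
      rw [Real.log_div hv0.ne' hs0.ne', hcdef]
    have chord1 := aux_chord (1 - δ₁) s θ hv0 (by linarith) hs1 hθ0.le hθ1.le
    rw [e1, e2, ← hexpθ, e3] at chord1
    have chord2 := aux_chord δ₀ s θ hδ₀0 h3 hs1 hθ0.le hθ1.le
    rw [e1', ← hexpθ, e3'] at chord2
    have m1 : θ * lB ≤ Real.log (1 - (1 - δ₁) * Real.exp (-μ)) - Real.log δ₁ := by
      rw [hlB]; nlinarith [chord1]
    have m2 : θ * lA ≤ Real.log (1 - δ₀ * Real.exp (-μ)) - Real.log (1 - δ₀) := by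
      rw [hlA]; nlinarith [chord2]
    have mB0 : 0 < θ * lB := mul_pos hθ0 hB0
    have mA0 : 0 < θ * lA := mul_pos hθ0 hA0
    rw [Real.log_div hX0.ne' h1.ne', Real.log_div hY0.ne' h1δ₀.ne']
    calc μ ^ 2 = θ ^ 2 * c ^ 2 := by rw [← hθc]; ring
      _ < θ ^ 2 * (lA * lB) := by
          exact mul_lt_mul_of_pos_left hAB (by positivity)
      _ = (θ * lB) * (θ * lA) := by ring
      _ ≤ _ := mul_le_mul m1 m2 mA0.le (mB0.le.trans m1)
end

section
/- Let δ = (δ₀,δ₁) ∈ [0,1]² be a decision lying on the boundary of the unit square (i.e. δ₀ ∈ {0,1} or δ₁ ∈ {0,1}) with δ ≠ (0,1). Then the maximum likelihood decision (0,1) dominates δ: R_{(0,1)}(θ) ≤ R_δ(θ) for all θ ∈ [0,1], with strict inequality for some θ ∈ [0,1]. -/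
open scoped ENNReal

lemma KLoss_zero_top (θ : ℝ) (h : θ ≠ 0) : KLoss θ 0 = ⊤ := by
  simp [KLoss, h]

lemma KLoss_one_top (θ : ℝ) (h : θ ≠ 1) : KLoss θ 1 = ⊤ := by
  simp [KLoss, h]

lemma risk_mle_zero : risk (0, 1) 0 = 0 := by
  simp [risk, KLoss]

lemma risk_mle_one : risk (0, 1) 1 = 0 := by
  simp [risk, KLoss]

lemma KLoss_pos_zero (d : ℝ) (hd0 : 0 < d) (hd1 : d ≤ 1) : 0 < KLoss 0 d := by
  rcases eq_or_lt_of_le hd1 with h | h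
  · rw [h, KLoss_one_top 0 (by norm_num)]; simp
  · have hcond : ¬ (((0:ℝ) ≠ 0 ∧ d = 0) ∨ ((0:ℝ) ≠ 1 ∧ d = 1)) := by
      push_neg
      constructor
      · intro h'; exact absurd rfl h'
      · intro _; exact ne_of_lt h
    rw [KLoss, if_neg hcond]
    have hlog : (0:ℝ) < Real.log (1 / (1 - d)) := by
      apply Real.log_pos
      rw [one_lt_div (by linarith)]
      linarith
    simp only [zero_mul, one_mul, zero_add, sub_zero]
    exact ENNReal.ofReal_pos.mpr hlog

lemma KLoss_pos_one (d : ℝ) (hd0 : 0 ≤ d) (hd1 : d < 1) : 0 < KLoss 1 d := by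
  rcases eq_or_lt_of_le hd0 with h | h
  · rw [← h, KLoss_zero_top 1 (by norm_num)]; simp
  · have hcond : ¬ (((1:ℝ) ≠ 0 ∧ d = 0) ∨ ((1:ℝ) ≠ 1 ∧ d = 1)) := by
      push_neg
      constructor
      · intro _; exact (ne_of_gt h)
      · intro h'; exact absurd rfl h'
    rw [KLoss, if_neg hcond]
    have hlog : Real.log (1 / d) > 0 := by
      apply Real.log_pos
      rw [one_lt_div h]
      exact hd1
    simp only [sub_self, zero_mul, one_mul, add_zero]
    exact ENNReal.ofReal_pos.mpr hlog

lemma risk_boundary_top (δ : ℝ × ℝ)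
    (hbd : δ.1 = 0 ∨ δ.1 = 1 ∨ δ.2 = 0 ∨ δ.2 = 1)
    {θ : ℝ} (h0 : 0 < θ) (h1 : θ < 1) : risk δ θ = ⊤ := by
  have hθ0 : θ ≠ 0 := ne_of_gt h0
  have hθ1 : θ ≠ 1 := ne_of_lt h1
  have hw1 : ENNReal.ofReal (1 - θ) ≠ 0 := (ENNReal.ofReal_pos.mpr (by linarith)).ne'
  have hw2 : ENNReal.ofReal θ ≠ 0 := (ENNReal.ofReal_pos.mpr (by linarith)).ne'
  rcases hbd with h | h | h | h
  · rw [risk, h, KLoss_zero_top θ hθ0, ENNReal.mul_top hw1, top_add]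
  · rw [risk, h, KLoss_one_top θ hθ1, ENNReal.mul_top hw1, top_add]
  · rw [risk, h, KLoss_zero_top θ hθ0, ENNReal.mul_top hw2, add_top]
  · rw [risk, h, KLoss_one_top θ hθ1, ENNReal.mul_top hw2, add_top]

/-- Every decision on the boundary of the unit square other than the maximum likelihood
decision `(0,1)` is dominated by `(0,1)`. -/
theorem mle_dominates_boundary (δ : ℝ × ℝ)
    (h0 : δ.1 ∈ Set.Icc (0 : ℝ) 1) (h1 : δ.2 ∈ Set.Icc (0 : ℝ) 1)
    (hbd : δ.1 = 0 ∨ δ.1 = 1 ∨ δ.2 = 0 ∨ δ.2 = 1)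
    (hne : δ ≠ (0, 1)) :
    Dominates (0, 1) δ := by
  constructor
  · intro θ hθ
    obtain ⟨ha, hb⟩ := hθ
    rcases eq_or_lt_of_le ha with h | h
    · rw [← h, risk_mle_zero]; exact zero_le
    rcases eq_or_lt_of_le hb with h' | h'
    · rw [h', risk_mle_one]; exact zero_le
    · rw [risk_boundary_top δ hbd h h']; exact le_top
  · have hne' : δ.1 ≠ 0 ∨ δ.2 ≠ 1 := by
      by_contra hc
      push_neg at hc
      exact hne (Prod.ext hc.1 hc.2)
    rcases hne' with h | h
    · refine ⟨0, by norm_num, ?_⟩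
      rw [risk_mle_zero, risk]
      have : 0 < ENNReal.ofReal (1 - 0) * KLoss 0 δ.1 := by
        apply ENNReal.mul_pos
        · simp
        · exact (KLoss_pos_zero δ.1 (lt_of_le_of_ne h0.1 (Ne.symm h)) h0.2).ne'
      calc (0:ℝ≥0∞) < ENNReal.ofReal (1 - 0) * KLoss 0 δ.1 := this
        _ ≤ _ := le_self_add
    · refine ⟨1, by norm_num, ?_⟩
      rw [risk_mle_one, risk]
      have : 0 < ENNReal.ofReal 1 * KLoss 1 δ.2 := by
        apply ENNReal.mul_pos
        · simp
        · exact (KLoss_pos_one δ.2 h1.1 (lt_of_le_of_ne h1.2 h)).ne'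
      calc (0:ℝ≥0∞) < ENNReal.ofReal 1 * KLoss 1 δ.2 := this
        _ ≤ _ := le_add_self
end

section
/- The maximum likelihood decision (δ₀,δ₁) = (0,1) is admissible: no decision δ' ∈ [0,1]² dominates (0,1). -/
open scoped ENNReal

/-- The maximum likelihood decision `(0,1)` is admissible: no decision in `[0,1]²`
dominates it. -/
theorem mle_admissible :
    ∀ δ' : ℝ × ℝ, δ'.1 ∈ Set.Icc (0 : ℝ) 1 → δ'.2 ∈ Set.Icc (0 : ℝ) 1 →
      ¬ Dominates δ' (0, 1) := by
  rintro ⟨a, b⟩ ⟨ha0, ha1⟩ ⟨hb0, hb1⟩ ⟨hle, θ, hθ, hlt⟩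
  have h0 : risk (a, b) 0 ≤ risk (0, 1) 0 := hle 0 (by norm_num)
  have h1 : risk (a, b) 1 ≤ risk (0, 1) 1 := hle 1 (by norm_num)
  have hr0 : risk ((0:ℝ), (1:ℝ)) 0 = 0 := by
    simp [risk, KLoss]
  have hr1 : risk ((0:ℝ), (1:ℝ)) 1 = 0 := by
    simp [risk, KLoss]
  rw [hr0, le_zero_iff] at h0
  rw [hr1, le_zero_iff] at h1
  -- a = 0
  have ha : a = 0 := by
    by_contra hane
    rcases eq_or_ne a 1 with h | h
    · simp [risk, KLoss, h] at h0
    · have hK : KLoss 0 a = ENNReal.ofReal (Real.log (1 / (1 - a))) := by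
        simp [KLoss, h]
      have : risk (a, b) 0 = ENNReal.ofReal (Real.log (1 / (1 - a))) := by
        simp [risk, hK]
      rw [this, ENNReal.ofReal_eq_zero] at h0
      have hlt1 : a < 1 := lt_of_le_of_ne ha1 h
      have hpos : 0 < 1 / (1 - a) := one_div_pos.mpr (by linarith)
      have := (Real.log_nonpos_iff hpos.le).mp h0
      have : (1:ℝ) ≤ 1 - a := by
        rwa [div_le_one (by linarith)] at this
      exact hane (le_antisymm (by linarith) ha0)
  have hb : b = 1 := by
    by_contra hbne
    rcases eq_or_ne b 0 with h | h
    · simp [risk, KLoss, h] at h1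
    · have hK : KLoss 1 b = ENNReal.ofReal (Real.log (1 / b)) := by
        simp [KLoss, h, hbne]
      have : risk (a, b) 1 = ENNReal.ofReal (Real.log (1 / b)) := by
        simp [risk, hK]
      rw [this, ENNReal.ofReal_eq_zero] at h1
      have hbpos : 0 < b := lt_of_le_of_ne hb0 (Ne.symm h)
      have hpos : 0 < 1 / b := one_div_pos.mpr hbpos
      have := (Real.log_nonpos_iff hpos.le).mp h1
      have : (1:ℝ) ≤ b := by rwa [div_le_one hbpos] at this
      exact hbne (le_antisymm hb1 this)
  subst ha; subst hb
  exact lt_irrefl _ hlt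
end

section
/- For every c with 0 < c < 1, the constant decision (δ₀,δ₁) = (c,c) is admissible: no decision δ' ∈ [0,1]² dominates (c,c). -/
open scoped ENNReal

lemma kl_pos (c d : ℝ) (hc0 : 0 < c) (hc1 : c < 1) (hd0 : 0 < d) (hd1 : d < 1)
    (hne : d ≠ c) :
    0 < c * Real.log (c / d) + (1 - c) * Real.log ((1 - c) / (1 - d)) := by
  have h1 : Real.log (d / c) < d / c - 1 :=
    Real.log_lt_sub_one_of_pos (by positivity) (by
      intro h
      rw [div_eq_one_iff_eq (by linarith : c ≠ 0)] at h
      exact hne h)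
  have h2 : Real.log ((1 - d) / (1 - c)) < (1 - d) / (1 - c) - 1 :=
    Real.log_lt_sub_one_of_pos (div_pos (by linarith) (by linarith)) (by
      intro h
      rw [div_eq_one_iff_eq (by linarith : (1:ℝ) - c ≠ 0)] at h
      exact hne (by linarith))
  have e1 : Real.log (c / d) = - Real.log (d / c) := by
    rw [← Real.log_inv]; congr 1; field_simp
  have e2 : Real.log ((1 - c) / (1 - d)) = - Real.log ((1 - d) / (1 - c)) := by
    rw [← Real.log_inv]; congr 1; field_simp
  rw [e1, e2]
  have hx : c * (d / c) = d := by field_simp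
  have hy : (1 - c) * ((1 - d) / (1 - c)) = 1 - d := by
    rw [mul_div_assoc'] ; exact mul_div_cancel_left₀ _ (by linarith)
  nlinarith [mul_lt_mul_of_pos_left h1 hc0,
    mul_lt_mul_of_pos_left h2 (by linarith : (0:ℝ) < 1 - c)]

lemma kl_eq_zero (c d : ℝ) (hc0 : 0 < c) (hc1 : c < 1) (hd : d ∈ Set.Icc (0:ℝ) 1)
    (h : KLoss c d = 0) : d = c := by
  unfold KLoss at h
  split_ifs at h with hcond
  · exact absurd h (by simp)
  · push_neg at hcond
    have hd0 : d ≠ 0 := hcond.1 (by linarith)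
    have hd1 : d ≠ 1 := hcond.2 (by linarith)
    have hd0' : 0 < d := lt_of_le_of_ne hd.1 (Ne.symm hd0)
    have hd1' : d < 1 := lt_of_le_of_ne hd.2 hd1
    by_contra hne
    have := kl_pos c d hc0 hc1 hd0' hd1' hne
    rw [ENNReal.ofReal_eq_zero] at h
    linarith

lemma kl_cc (c : ℝ) (hc0 : 0 < c) (hc1 : c < 1) : KLoss c c = 0 := by
  unfold KLoss
  rw [if_neg]
  · have : c / c = 1 := div_self (by linarith)
    rw [this]
    have : (1 - c) / (1 - c) = 1 := div_self (by linarith)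
    rw [this]
    simp
  · push_neg
    constructor
    · intro _; linarith
    · intro _; linarith

/-- Every constant decision `(c, c)` with `0 < c < 1` is admissible: no decision in
`[0,1]²` dominates it. -/
theorem constant_admissible (c : ℝ) (hc0 : 0 < c) (hc1 : c < 1) :
    ∀ δ' : ℝ × ℝ, δ'.1 ∈ Set.Icc (0 : ℝ) 1 → δ'.2 ∈ Set.Icc (0 : ℝ) 1 →
      ¬ Dominates δ' (c, c) := by
  intro δ' h1 h2 ⟨hle, θ₀, hθ₀, hlt⟩
  have hrc : risk (c, c) c = 0 := by
    simp [risk, kl_cc c hc0 hc1]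
  have h := hle c ⟨le_of_lt hc0, le_of_lt hc1⟩
  rw [hrc, le_zero_iff] at h
  unfold risk at h
  rw [add_eq_zero] at h
  have hw1 : ENNReal.ofReal (1 - c) ≠ 0 := by
    simp [ENNReal.ofReal_eq_zero]; linarith
  have hw2 : ENNReal.ofReal c ≠ 0 := by
    simp [ENNReal.ofReal_eq_zero]; linarith
  have k1 : KLoss c δ'.1 = 0 := by
    rcases mul_eq_zero.mp h.1 with h' | h'
    · exact absurd h' hw1
    · exact h'
  have k2 : KLoss c δ'.2 = 0 := by
    rcases mul_eq_zero.mp h.2 with h' | h'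
    · exact absurd h' hw2
    · exact h'
  have e1 : δ'.1 = c := kl_eq_zero c _ hc0 hc1 h1 k1
  have e2 : δ'.2 = c := kl_eq_zero c _ hc0 hc1 h2 k2
  have : δ' = (c, c) := Prod.ext e1 e2
  rw [this] at hlt
  exact lt_irrefl _ hlt
end

section
/- Let 𝒜 = {(δ₀,δ₁) ∈ [0,1]² : 0 < δ₀ < δ₁ < 1} ∪ {(δ₀,δ₁) : 0 < δ₀ = δ₁ < 1} ∪ {(0,1)}. Then a decision δ ∈ [0,1]² is admissible if and only if δ ∈ 𝒜; moreover 𝒜 is a complete class, i.e. for every δ ∈ [0,1]² \ 𝒜 there exists δ' ∈ 𝒜 that dominates δ. Hence 𝒜 is the minimal complete class. -/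
open scoped ENNReal

/-- The set of all decisions: the unit square `[0,1]²`. -/
def Decisions : Set (ℝ × ℝ) := Set.Icc (0 : ℝ) 1 ×ˢ Set.Icc (0 : ℝ) 1

/-- A decision is admissible if no decision in `[0,1]²` dominates it. -/
def Admissible (δ : ℝ × ℝ) : Prop := ∀ δ' ∈ Decisions, ¬ Dominates δ' δ

/-- A class of decisions is complete if every decision outside it is dominated by
some decision in it. -/
def CompleteClass (C : Set (ℝ × ℝ)) : Prop :=
  C ⊆ Decisions ∧ ∀ δ ∈ Decisions \ C, ∃ δ' ∈ C, Dominates δ' δ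

/-- The class `𝒜 = 𝒞_< ∪ 𝒞_= ∪ {(0,1)}`. -/
def classA : Set (ℝ × ℝ) :=
  {δ : ℝ × ℝ | 0 < δ.1 ∧ δ.1 < δ.2 ∧ δ.2 < 1} ∪
    {δ : ℝ × ℝ | 0 < δ.1 ∧ δ.1 = δ.2 ∧ δ.2 < 1} ∪ {((0 : ℝ), (1 : ℝ))}

noncomputable def klR (θ d : ℝ) : ℝ :=
  θ * Real.log (θ / d) + (1 - θ) * Real.log ((1 - θ) / (1 - d))

lemma klR_pos {θ d : ℝ} (h0 : 0 ≤ θ) (h1 : θ ≤ 1) (hd0 : 0 < d) (hd1 : d < 1)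
    (hne : θ ≠ d) : 0 < klR θ d := by
  unfold klR
  rcases eq_or_lt_of_le h0 with h | h0'
  · subst h
    simp only [zero_mul, zero_div, sub_zero, one_mul, zero_add, Real.log_zero]
    have h2 : (1:ℝ) < 1 / (1 - d) := by
      rw [lt_div_iff₀ (by linarith)]; linarith
    exact Real.log_pos h2
  rcases eq_or_lt_of_le h1 with h | h1'
  · subst h
    simp only [sub_self, zero_mul, add_zero, zero_div, Real.log_zero]
    have h2 : (1:ℝ) < 1 / d := by rw [lt_div_iff₀ hd0]; linarith
    have := Real.log_pos h2
    nlinarith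
  · have e1 : Real.log (θ / d) = Real.log θ - Real.log d :=
      Real.log_div (ne_of_gt h0') (ne_of_gt hd0)
    have e2 : Real.log ((1 - θ) / (1 - d)) = Real.log (1-θ) - Real.log (1-d) :=
      Real.log_div (by linarith) (by linarith)
    rw [e1, e2]
    have l1 : Real.log (d/θ) < d/θ - 1 :=
      Real.log_lt_sub_one_of_pos (div_pos hd0 h0') (by
        intro h; apply hne; field_simp at h; linarith)
    have l2 : Real.log ((1-d)/(1-θ)) < (1-d)/(1-θ) - 1 :=
      Real.log_lt_sub_one_of_pos (div_pos (by linarith) (by linarith)) (by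
        intro h; apply hne
        rw [div_eq_one_iff_eq (by linarith : (1:ℝ)-θ ≠ 0)] at h; linarith)
    have e3 : Real.log (d/θ) = Real.log d - Real.log θ := Real.log_div (ne_of_gt hd0) (ne_of_gt h0')
    have e4 : Real.log ((1-d)/(1-θ)) = Real.log (1-d) - Real.log (1-θ) :=
      Real.log_div (by linarith) (by linarith)
    rw [e3] at l1; rw [e4] at l2
    have m1 : θ * (Real.log d - Real.log θ) < θ * (d/θ - 1) := by
      exact mul_lt_mul_of_pos_left l1 h0'
    have m2 : (1-θ) * (Real.log (1-d) - Real.log (1-θ)) < (1-θ) * ((1-d)/(1-θ) - 1) :=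
      mul_lt_mul_of_pos_left l2 (by linarith)
    have q1 : θ * (d/θ - 1) = d - θ := by field_simp
    have q2 : (1-θ) * ((1-d)/(1-θ) - 1) = θ - d := by
      rw [mul_sub, mul_one, mul_div_cancel₀ _ (by linarith : (1:ℝ)-θ ≠ 0)]; ring
    nlinarith

lemma klR_self {θ : ℝ} (h0 : 0 < θ) (h1 : θ < 1) : klR θ θ = 0 := by
  unfold klR
  rw [div_self (ne_of_gt h0), div_self (by linarith : (1:ℝ) - θ ≠ 0), Real.log_one]
  ring

lemma klR_nonneg {θ d : ℝ} (h0 : 0 ≤ θ) (h1 : θ ≤ 1) (hd0 : 0 < d) (hd1 : d < 1) :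
    0 ≤ klR θ d := by
  rcases eq_or_ne θ d with h | h
  · subst h; rw [klR_self hd0 hd1]
  · exact (klR_pos h0 h1 hd0 hd1 h).le

lemma klR_eq {θ d : ℝ} (hθ0 : 0 < θ) (hθ1 : θ < 1) (hd0 : 0 < d) (hd1 : d < 1) :
    klR θ d = θ * (Real.log θ - Real.log d) + (1-θ) * (Real.log (1-θ) - Real.log (1-d)) := by
  unfold klR
  rw [Real.log_div (ne_of_gt hθ0) (ne_of_gt hd0),
    Real.log_div (by linarith) (by linarith)]

lemma KLoss_int {θ d : ℝ} (hd0 : 0 < d) (hd1 : d < 1) :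
    KLoss θ d = ENNReal.ofReal (klR θ d) := by
  unfold KLoss klR
  rw [if_neg]
  rintro (⟨_, h⟩ | ⟨_, h⟩)
  · exact hd0.ne' h
  · exact hd1.ne h

lemma KLoss_top0 {θ : ℝ} (hθ : θ ≠ 0) : KLoss θ 0 = ⊤ := if_pos (Or.inl ⟨hθ, rfl⟩)

lemma KLoss_top1 {θ : ℝ} (hθ : θ ≠ 1) : KLoss θ 1 = ⊤ := if_pos (Or.inr ⟨hθ, rfl⟩)

lemma KLoss_left {d : ℝ} (hd : d ≠ 1) :
    KLoss 0 d = ENNReal.ofReal (- Real.log (1 - d)) := by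
  unfold KLoss
  rw [if_neg (by simp [hd])]
  norm_num [Real.log_inv]

lemma KLoss_right {d : ℝ} (hd : d ≠ 0) :
    KLoss 1 d = ENNReal.ofReal (- Real.log d) := by
  unfold KLoss
  rw [if_neg (by simp [hd])]
  norm_num [Real.log_inv]

lemma KLoss_00 : KLoss 0 0 = 0 := by
  rw [KLoss_left (by norm_num)]; norm_num

lemma KLoss_11 : KLoss 1 1 = 0 := by
  rw [KLoss_right (by norm_num)]; norm_num

lemma risk_zero (δ : ℝ × ℝ) : risk δ 0 = KLoss 0 δ.1 := by
  unfold risk; norm_num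

lemma risk_one (δ : ℝ × ℝ) : risk δ 1 = KLoss 1 δ.2 := by
  unfold risk; norm_num

lemma risk_int {d₁ d₂ θ : ℝ} (hθ0 : 0 < θ) (hθ1 : θ < 1)
    (h10 : 0 < d₁) (h11 : d₁ < 1) (h20 : 0 < d₂) (h21 : d₂ < 1) :
    risk (d₁, d₂) θ = ENNReal.ofReal ((1-θ) * klR θ d₁ + θ * klR θ d₂) := by
  unfold risk
  rw [KLoss_int h10 h11, KLoss_int h20 h21,
    ← ENNReal.ofReal_mul (by linarith : (0:ℝ) ≤ 1 - θ),
    ← ENNReal.ofReal_mul hθ0.le,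
    ← ENNReal.ofReal_add
      (mul_nonneg (by linarith) (klR_nonneg hθ0.le hθ1.le h10 h11))
      (mul_nonneg hθ0.le (klR_nonneg hθ0.le hθ1.le h20 h21))]

lemma risk_top_left {δ : ℝ × ℝ} {θ : ℝ} (hθ0 : 0 < θ) (hθ1 : θ < 1)
    (h : δ.1 = 0 ∨ δ.1 = 1) : risk δ θ = ⊤ := by
  unfold risk
  have hK : KLoss θ δ.1 = ⊤ := by
    rcases h with h | h <;> rw [h]
    exacts [KLoss_top0 hθ0.ne', KLoss_top1 hθ1.ne]
  rw [hK, ENNReal.mul_top (by simp [ENNReal.ofReal_eq_zero]; linarith), top_add]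

lemma risk_top_right {δ : ℝ × ℝ} {θ : ℝ} (hθ0 : 0 < θ) (hθ1 : θ < 1)
    (h : δ.2 = 0 ∨ δ.2 = 1) : risk δ θ = ⊤ := by
  unfold risk
  have hK : KLoss θ δ.2 = ⊤ := by
    rcases h with h | h <;> rw [h]
    exacts [KLoss_top0 hθ0.ne', KLoss_top1 hθ1.ne]
  rw [hK, ENNReal.mul_top (by simp [ENNReal.ofReal_eq_zero]; linarith), add_top]

set_option maxHeartbeats 1000000 in
lemma caseA_core {x y θ : ℝ} (hy0 : 0 < y) (hyx : y < x) (hx1 : x < 1)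
    (hθ0 : 0 < θ) (hθ1 : θ < 1) :
    klR θ (x / (1 + x - y)) ≤ (1-θ) * klR θ x + θ * klR θ y := by
  have hden : 0 < 1 + x - y := by linarith
  have hx0 : 0 < x := hy0.trans hyx
  set m := x / (1 + x - y) with hm
  have hm0 : 0 < m := div_pos hx0 hden
  have hm1 : m < 1 := by rw [hm, div_lt_one hden]; linarith
  have hxm : m * (1 + x - y) = x := by rw [hm]; field_simp
  rw [klR_eq hθ0 hθ1 hm0 hm1, klR_eq hθ0 hθ1 hx0 hx1,
    klR_eq hθ0 hθ1 hy0 (hyx.trans hx1)]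
  have bound : ∀ z : ℝ, 0 < z → ∀ w : ℝ, 0 < w → w * (Real.log z - Real.log w) ≤ z - w := by
    intro z hz w hw
    have l := Real.log_le_sub_one_of_pos (div_pos hz hw)
    rw [Real.log_div hz.ne' hw.ne'] at l
    have := mul_le_mul_of_nonneg_left l hw.le
    calc w * (Real.log z - Real.log w) ≤ w * (z / w - 1) := this
      _ = z - w := by field_simp
  have L1 : m * (Real.log x - Real.log m) ≤ x - m := bound x hx0 m hm0
  have L2 : m * (Real.log y - Real.log m) ≤ y - m := bound y hy0 m hm0
  have L3 : (1-m) * (Real.log (1-x) - Real.log (1-m)) ≤ (1-x) - (1-m) :=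
    bound (1-x) (by linarith) (1-m) (by linarith)
  have L4 : (1-m) * (Real.log (1-y) - Real.log (1-m)) ≤ (1-y) - (1-m) :=
    bound (1-y) (by linarith) (1-m) (by linarith)
  have c1 : (0:ℝ) ≤ θ*(1-θ)*(1-m) := by
    apply mul_nonneg (mul_nonneg hθ0.le (by linarith)); linarith
  have c2 : (0:ℝ) ≤ θ*θ*(1-m) := mul_nonneg (mul_nonneg hθ0.le hθ0.le) (by linarith)
  have c3 : (0:ℝ) ≤ (1-θ)*(1-θ)*m := mul_nonneg (mul_nonneg (by linarith) (by linarith)) hm0.le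
  have c4 : (0:ℝ) ≤ θ*(1-θ)*m := by
    apply mul_nonneg (mul_nonneg hθ0.le (by linarith)) hm0.le
  have M1 := mul_le_mul_of_nonneg_left L1 c1
  have M2 := mul_le_mul_of_nonneg_left L2 c2
  have M3 := mul_le_mul_of_nonneg_left L3 c3
  have M4 := mul_le_mul_of_nonneg_left L4 c4
  have hkey : θ*(1-θ)*(1-m)*(x-m) + θ*θ*(1-m)*(y-m) + (1-θ)*(1-θ)*m*((1-x)-(1-m))
      + θ*(1-θ)*m*((1-y)-(1-m)) = -(x-y)*(θ-m)^2 := by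
    linear_combination (m - θ) * hxm
  have hsq : (0:ℝ) ≤ (x-y)*(θ-m)^2 := mul_nonneg (by linarith) (sq_nonneg _)
  have hc : 0 < m * (1-m) := mul_pos hm0 (by linarith)
  -- reduce to a multiplied version of the goal
  rw [← sub_nonneg]
  have H : 0 ≤ (m*(1-m)) * (((1-θ) * (θ * (Real.log θ - Real.log x) + (1-θ) * (Real.log (1-θ) - Real.log (1-x)))
      + θ * (θ * (Real.log θ - Real.log y) + (1-θ) * (Real.log (1-θ) - Real.log (1-y))))
      - (θ * (Real.log θ - Real.log m) + (1-θ) * (Real.log (1-θ) - Real.log (1-m)))) := by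
    linarith [M1, M2, M3, M4, hkey, hsq]
  nlinarith [H, hc]

lemma dom_caseA {x y : ℝ} (hy0 : 0 ≤ y) (hyx : y < x) (hx1 : x ≤ 1) :
    Dominates (x/(1+x-y), x/(1+x-y)) (x, y) := by
  have hden : 0 < 1 + x - y := by linarith
  have hx0 : 0 < x := lt_of_le_of_lt hy0 hyx
  set m := x / (1+x-y) with hm
  have hm0 : 0 < m := div_pos hx0 hden
  have hy1 : y < 1 := lt_of_lt_of_le hyx hx1
  have hm1 : m < 1 := by rw [hm, div_lt_one hden]; linarith
  have hmy : y < m := by rw [hm, lt_div_iff₀ hden]; nlinarith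
  have hmx : m ≤ x := by rw [hm, div_le_iff₀ hden]; nlinarith
  constructor
  · intro θ hθ
    rcases eq_or_lt_of_le hθ.1 with h0 | h0'
    · rw [← h0, risk_zero, risk_zero]
      show KLoss 0 m ≤ KLoss 0 x
      rcases eq_or_lt_of_le hx1 with hx | hx
      · rw [hx, KLoss_top1 (by norm_num)]; exact le_top
      · rw [KLoss_left hm1.ne, KLoss_left hx.ne]
        apply ENNReal.ofReal_le_ofReal
        have := Real.log_le_log (by linarith : (0:ℝ) < 1 - x) (by linarith : 1 - x ≤ 1 - m)
        linarith
    rcases eq_or_lt_of_le hθ.2 with h1 | h1'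
    · rw [h1, risk_one, risk_one]
      show KLoss 1 m ≤ KLoss 1 y
      rcases eq_or_lt_of_le hy0 with hy | hy
      · rw [← hy, KLoss_top0 (by norm_num)]; exact le_top
      · rw [KLoss_right hm0.ne', KLoss_right hy.ne']
        apply ENNReal.ofReal_le_ofReal
        have := Real.log_le_log hy hmy.le
        linarith
    rcases eq_or_lt_of_le hx1 with hx | hx
    · rw [risk_top_left h0' h1' (Or.inr hx : ((x,y):ℝ×ℝ).1 = 0 ∨ ((x,y):ℝ×ℝ).1 = 1)]
      exact le_top
    rcases eq_or_lt_of_le hy0 with hy | hy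
    · rw [risk_top_right h0' h1' (Or.inl hy.symm : ((x,y):ℝ×ℝ).2 = 0 ∨ ((x,y):ℝ×ℝ).2 = 1)]
      exact le_top
    · rw [risk_int h0' h1' hm0 hm1 hm0 hm1, risk_int h0' h1' hx0 hx hy hy1]
      apply ENNReal.ofReal_le_ofReal
      have := caseA_core hy hyx hx h0' h1'
      rw [hm] at *
      linarith
  · refine ⟨1, ⟨zero_le_one, le_refl 1⟩, ?_⟩
    rw [risk_one, risk_one]
    show KLoss 1 m < KLoss 1 y
    rcases eq_or_lt_of_le hy0 with hy | hy
    · rw [← hy, KLoss_top0 (by norm_num), KLoss_right hm0.ne']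
      exact ENNReal.ofReal_lt_top
    · rw [KLoss_right hm0.ne', KLoss_right hy.ne']
      rw [ENNReal.ofReal_lt_ofReal_iff (by linarith [Real.log_neg hy hy1])]
      linarith [Real.log_lt_log hy hmy]

lemma dom_B {y : ℝ} (hy0 : 0 ≤ y) (hy1 : y < 1) :
    Dominates ((0:ℝ), (1:ℝ)) ((0:ℝ), y) := by
  constructor
  · intro θ hθ
    rcases eq_or_lt_of_le hθ.1 with h0 | h0'
    · rw [← h0, risk_zero, risk_zero]
    rcases eq_or_lt_of_le hθ.2 with h1 | h1'
    · rw [h1, risk_one]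
      show KLoss 1 1 ≤ _
      rw [KLoss_11]; exact zero_le
    · rw [risk_top_left h0' h1' (Or.inl rfl : ((0,y):ℝ×ℝ).1 = 0 ∨ ((0,y):ℝ×ℝ).1 = 1)]
      exact le_top
  · refine ⟨1, ⟨zero_le_one, le_refl 1⟩, ?_⟩
    rw [risk_one, risk_one]
    show KLoss 1 1 < KLoss 1 y
    rw [KLoss_11]
    rcases eq_or_lt_of_le hy0 with hy | hy
    · rw [← hy, KLoss_top0 (by norm_num)]; exact ENNReal.zero_lt_top
    · rw [KLoss_right hy.ne']
      rw [ENNReal.ofReal_pos]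
      linarith [Real.log_neg hy hy1]

lemma dom_C {x : ℝ} (hx0 : 0 < x) (hx1 : x ≤ 1) :
    Dominates ((0:ℝ), (1:ℝ)) (x, (1:ℝ)) := by
  constructor
  · intro θ hθ
    rcases eq_or_lt_of_le hθ.1 with h0 | h0'
    · rw [← h0, risk_zero]
      show KLoss 0 0 ≤ _
      rw [KLoss_00]; exact zero_le
    rcases eq_or_lt_of_le hθ.2 with h1 | h1'
    · rw [h1, risk_one, risk_one]
    · rw [risk_top_right h0' h1' (Or.inr rfl : ((x,1):ℝ×ℝ).2 = 0 ∨ ((x,1):ℝ×ℝ).2 = 1)]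
      exact le_top
  · refine ⟨0, ⟨le_refl 0, zero_le_one⟩, ?_⟩
    rw [risk_zero, risk_zero]
    show KLoss 0 0 < KLoss 0 x
    rw [KLoss_00]
    rcases eq_or_lt_of_le hx1 with hx | hx
    · rw [hx, KLoss_top1 (by norm_num)]; exact ENNReal.zero_lt_top
    · rw [KLoss_left hx.ne]
      rw [ENNReal.ofReal_pos]
      linarith [Real.log_neg (by linarith : (0:ℝ) < 1 - x) (by linarith : 1 - x < 1)]

lemma KLoss0_eq_zero {d : ℝ} (hd0 : 0 ≤ d) (hd1 : d ≤ 1) (h : KLoss 0 d = 0) : d = 0 := by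
  rcases eq_or_lt_of_le hd1 with hd | hd
  · rw [hd, KLoss_top1 (by norm_num)] at h; exact absurd h (by simp)
  · rw [KLoss_left hd.ne, ENNReal.ofReal_eq_zero] at h
    by_contra hne
    have hd0' : 0 < d := lt_of_le_of_ne hd0 (Ne.symm hne)
    have := Real.log_neg (by linarith : (0:ℝ) < 1 - d) (by linarith : 1 - d < 1)
    linarith

lemma KLoss1_eq_zero {d : ℝ} (hd0 : 0 ≤ d) (hd1 : d ≤ 1) (h : KLoss 1 d = 0) : d = 1 := by
  rcases eq_or_lt_of_le hd0 with hd | hd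
  · rw [← hd, KLoss_top0 (by norm_num)] at h; exact absurd h (by simp)
  · rw [KLoss_right hd.ne', ENNReal.ofReal_eq_zero] at h
    by_contra hne
    have hd1' : d < 1 := lt_of_le_of_ne hd1 hne
    have := Real.log_neg hd hd1'
    linarith

lemma KLoss_eq_zero_int {m d : ℝ} (hm0 : 0 < m) (hm1 : m < 1) (hd0 : 0 ≤ d) (hd1 : d ≤ 1)
    (h : KLoss m d = 0) : d = m := by
  rcases eq_or_lt_of_le hd0 with hd | hd
  · rw [← hd, KLoss_top0 hm0.ne'] at h; exact absurd h (by simp)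
  rcases eq_or_lt_of_le hd1 with hd' | hd'
  · rw [hd', KLoss_top1 hm1.ne] at h; exact absurd h (by simp)
  · rw [KLoss_int hd hd', ENNReal.ofReal_eq_zero] at h
    by_contra hne
    exact absurd h (not_le.mpr (klR_pos hm0.le hm1.le hd hd' (fun hh => hne hh.symm)))

lemma adm_01 : Admissible ((0:ℝ), (1:ℝ)) := by
  rintro ⟨a, b⟩ ⟨⟨ha0, ha1⟩, ⟨hb0, hb1⟩⟩ ⟨hle, θ₀, hθ₀, hlt⟩
  have h0pre := hle 0 ⟨le_refl 0, zero_le_one⟩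
  rw [risk_zero, risk_zero] at h0pre
  have h0 : KLoss 0 a ≤ KLoss 0 0 := h0pre
  rw [KLoss_00, le_zero_iff] at h0
  have ha : a = 0 := KLoss0_eq_zero ha0 ha1 h0
  have h1pre := hle 1 ⟨zero_le_one, le_refl 1⟩
  rw [risk_one, risk_one] at h1pre
  have h1 : KLoss 1 b ≤ KLoss 1 1 := h1pre
  rw [KLoss_11, le_zero_iff] at h1
  have hb : b = 1 := KLoss1_eq_zero hb0 hb1 h1
  subst ha; subst hb
  exact lt_irrefl _ hlt

lemma adm_diag {m : ℝ} (hm0 : 0 < m) (hm1 : m < 1) : Admissible (m, m) := by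
  rintro ⟨a, b⟩ ⟨⟨ha0, ha1⟩, ⟨hb0, hb1⟩⟩ ⟨hle, θ₀, hθ₀, hlt⟩
  have h := hle m ⟨hm0.le, hm1.le⟩
  have hrm : risk (m, m) m = 0 := by
    rw [risk_int hm0 hm1 hm0 hm1 hm0 hm1, klR_self hm0 hm1]
    norm_num
  rw [hrm, le_zero_iff] at h
  have h' : ENNReal.ofReal (1-m) * KLoss m a + ENNReal.ofReal m * KLoss m b = 0 := h
  rw [add_eq_zero] at h'
  have hKa : KLoss m a = 0 := by
    rcases mul_eq_zero.mp h'.1 with hc | hc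
    · rw [ENNReal.ofReal_eq_zero] at hc; linarith
    · exact hc
  have hKb : KLoss m b = 0 := by
    rcases mul_eq_zero.mp h'.2 with hc | hc
    · rw [ENNReal.ofReal_eq_zero] at hc; linarith
    · exact hc
  have ha : a = m := KLoss_eq_zero_int hm0 hm1 ha0 ha1 hKa
  have hb : b = m := KLoss_eq_zero_int hm0 hm1 hb0 hb1 hKb
  subst ha; subst hb
  exact lt_irrefl _ hlt

noncomputable def Dexpr (x y a b θ : ℝ) : ℝ :=
  (1-θ)*(θ*(Real.log a - Real.log x) + (1-θ)*(Real.log (1-a) - Real.log (1-x)))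
  + θ*(θ*(Real.log b - Real.log y) + (1-θ)*(Real.log (1-b) - Real.log (1-y)))

lemma Dexpr_nonneg {x y a b θ : ℝ} (hθ0 : 0 < θ) (hθ1 : θ < 1)
    (hx0 : 0 < x) (hx1 : x < 1) (hy0 : 0 < y) (hy1 : y < 1)
    (ha0 : 0 < a) (ha1 : a < 1) (hb0 : 0 < b) (hb1 : b < 1)
    (hle : risk (a,b) θ ≤ risk (x,y) θ) : 0 ≤ Dexpr x y a b θ := by
  rw [risk_int hθ0 hθ1 ha0 ha1 hb0 hb1, risk_int hθ0 hθ1 hx0 hx1 hy0 hy1] at hle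
  have h := (ENNReal.ofReal_le_ofReal_iff
    (add_nonneg (mul_nonneg (by linarith) (klR_nonneg hθ0.le hθ1.le hx0 hx1))
      (mul_nonneg hθ0.le (klR_nonneg hθ0.le hθ1.le hy0 hy1)))).mp hle
  rw [klR_eq hθ0 hθ1 ha0 ha1, klR_eq hθ0 hθ1 hb0 hb1, klR_eq hθ0 hθ1 hx0 hx1,
    klR_eq hθ0 hθ1 hy0 hy1] at h
  unfold Dexpr
  nlinarith [h]

lemma bracket_le {x a : ℝ} (hx0 : 0 < x) (hx1 : x < 1) (ha0 : 0 < a) (ha1 : a < 1) :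
    x*(Real.log a - Real.log x) + (1-x)*(Real.log (1-a) - Real.log (1-x)) ≤ 0 := by
  have e1 : Real.exp (Real.log a - Real.log x) = a/x := by
    rw [Real.exp_sub, Real.exp_log ha0, Real.exp_log hx0]
  have e2 : Real.exp (Real.log (1-a) - Real.log (1-x)) = (1-a)/(1-x) := by
    rw [Real.exp_sub, Real.exp_log (by linarith), Real.exp_log (by linarith)]
  have b1 : Real.log a - Real.log x + 1 ≤ a/x := by
    rw [← e1]; exact Real.add_one_le_exp _
  have b2 : Real.log (1-a) - Real.log (1-x) + 1 ≤ (1-a)/(1-x) := by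
    rw [← e2]; exact Real.add_one_le_exp _
  have m1 := mul_le_mul_of_nonneg_left b1 hx0.le
  have m2 := mul_le_mul_of_nonneg_left b2 (by linarith : (0:ℝ) ≤ 1-x)
  have q1 : x*(a/x) = a := by field_simp
  have q2 : (1-x)*((1-a)/(1-x)) = 1-a :=
    mul_div_cancel₀ _ (by linarith : (1:ℝ)-x ≠ 0)
  nlinarith [m1, m2]

lemma bracket_eq_zero {x a : ℝ} (hx0 : 0 < x) (hx1 : x < 1) (ha0 : 0 < a) (ha1 : a < 1)
    (h : x*(Real.log a - Real.log x) + (1-x)*(Real.log (1-a) - Real.log (1-x)) = 0) :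
    a = x := by
  by_contra hne
  have e1 : Real.exp (Real.log a - Real.log x) = a/x := by
    rw [Real.exp_sub, Real.exp_log ha0, Real.exp_log hx0]
  have e2 : Real.exp (Real.log (1-a) - Real.log (1-x)) = (1-a)/(1-x) := by
    rw [Real.exp_sub, Real.exp_log (by linarith), Real.exp_log (by linarith)]
  have hu : Real.log a - Real.log x ≠ 0 := by
    intro h0
    rw [h0, Real.exp_zero] at e1
    apply hne
    field_simp at e1
    linarith
  have b1 : Real.log a - Real.log x + 1 < a/x := by
    rw [← e1]; exact Real.add_one_lt_exp hu
  have b2 : Real.log (1-a) - Real.log (1-x) + 1 ≤ (1-a)/(1-x) := by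
    rw [← e2]; exact Real.add_one_le_exp _
  have m1 := mul_lt_mul_of_pos_left b1 hx0
  have m2 := mul_le_mul_of_nonneg_left b2 (by linarith : (0:ℝ) ≤ 1-x)
  have q1 : x*(a/x) = a := by field_simp
  have q2 : (1-x)*((1-a)/(1-x)) = 1-a :=
    mul_div_cancel₀ _ (by linarith : (1:ℝ)-x ≠ 0)
  nlinarith [m1, m2]

set_option maxHeartbeats 1600000 in
lemma adm_lt {x y : ℝ} (hx0 : 0 < x) (hxy : x < y) (hy1 : y < 1) : Admissible (x, y) := by
  rintro ⟨a, b⟩ ⟨⟨ha0, ha1⟩, ⟨hb0, hb1⟩⟩ ⟨hle, θ₀, hθ₀, hlt⟩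
  have hx1 : x < 1 := hxy.trans hy1
  have hy0 : 0 < y := hx0.trans hxy
  have hfin : risk (x,y) (1/2) ≠ ⊤ := by
    rw [risk_int (by norm_num) (by norm_num) hx0 hx1 hy0 hy1]; exact ENNReal.ofReal_ne_top
  have hhalf := hle (1/2) ⟨by norm_num, by norm_num⟩
  have ha0' : 0 < a := by
    rcases eq_or_lt_of_le ha0 with h | h
    · exfalso
      rw [risk_top_left (δ := (a,b)) (by norm_num) (by norm_num) (Or.inl h.symm)] at hhalf
      exact hfin (top_le_iff.mp hhalf)
    · exact h
  have ha1' : a < 1 := by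
    rcases eq_or_lt_of_le ha1 with h | h
    · exfalso
      rw [risk_top_left (δ := (a,b)) (by norm_num) (by norm_num) (Or.inr h)] at hhalf
      exact hfin (top_le_iff.mp hhalf)
    · exact h
  have hb0' : 0 < b := by
    rcases eq_or_lt_of_le hb0 with h | h
    · exfalso
      rw [risk_top_right (δ := (a,b)) (by norm_num) (by norm_num) (Or.inl h.symm)] at hhalf
      exact hfin (top_le_iff.mp hhalf)
    · exact h
  have hb1' : b < 1 := by
    rcases eq_or_lt_of_le hb1 with h | h
    · exfalso
      rw [risk_top_right (δ := (a,b)) (by norm_num) (by norm_num) (Or.inr h)] at hhalf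
      exact hfin (top_le_iff.mp hhalf)
    · exact h
  -- three prior points p < x < r < y < q and positive weights
  set r : ℝ := (x+y)/2 with hr
  set q : ℝ := (1+y)/2 with hq
  set K : ℝ := x*(1-x)*(1-y)/8 with hK
  have hK0 : 0 < K := by
    rw [hK]
    exact div_pos (mul_pos (mul_pos hx0 (by linarith)) (by linarith)) (by norm_num)
  set p : ℝ := min (x/2) (K/2) with hp
  have hp0 : 0 < p := lt_min (by linarith) (by linarith)
  have hpx2 : p ≤ x/2 := min_le_left _ _
  have hpK : p ≤ K/2 := min_le_right _ _
  have hpx : p < x := by linarith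
  have hxr : x < r := by rw [hr]; linarith
  have hry : r < y := by rw [hr]; linarith
  have hyq : y < q := by rw [hq]; linarith
  have hq1 : q < 1 := by rw [hq]; linarith
  have f1 : 0 < 1-q := by linarith
  have f2 : 0 < q-x := by linarith
  have f3 : 0 < r := by linarith
  have f4 : 0 < y-r := by linarith
  have f5 : 0 < 1-r := by linarith
  have f6 : 0 < r-x := by linarith
  have f7 : 0 < q := by linarith
  have f8 : 0 < q-y := by linarith
  have f9 : 0 < 1-p := by linarith
  have f10 : 0 < x-p := by linarith
  have f11 : 0 < y-p := by linarith
  set Wp : ℝ := (1-q)*(q-x)*(r*(y-r)) + (1-r)*(r-x)*(q*(q-y)) with hWp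
  set Wr : ℝ := (1-p)*(x-p)*(q*(q-y)) - p*(y-p)*((1-q)*(q-x)) with hWr
  set Wq : ℝ := (1-p)*(x-p)*(r*(y-r)) + p*(y-p)*((1-r)*(r-x)) with hWq
  have hWp0 : 0 < Wp := by
    rw [hWp]
    exact add_pos (mul_pos (mul_pos f1 f2) (mul_pos f3 f4))
      (mul_pos (mul_pos f5 f6) (mul_pos f7 f8))
  have hWq0 : 0 < Wq := by
    rw [hWq]
    exact add_pos (mul_pos (mul_pos f9 f10) (mul_pos f3 f4))
      (mul_pos (mul_pos hp0 f11) (mul_pos f5 f6))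
  have hWr0 : 0 < Wr := by
    have e2 : (1-q)*(q-x) ≤ 1 :=
      mul_le_one₀ (by linarith) f2.le (by linarith)
    have hb1 : p*(y-p)*((1-q)*(q-x)) ≤ p := by
      calc p*(y-p)*((1-q)*(q-x)) ≤ p*(y-p) :=
            mul_le_of_le_one_right (mul_pos hp0 f11).le e2
        _ ≤ p := by nlinarith
    have g1 : 1-x ≤ 1-p := by linarith
    have g2 : x/2 ≤ x-p := by linarith
    have g3 : (1:ℝ)/2 ≤ q := by rw [hq]; linarith
    have g4 : q - y = (1-y)/2 := by rw [hq]; ring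
    have A : (1-x)*(x/2) ≤ (1-p)*(x-p) :=
      mul_le_mul g1 g2 (by linarith) (by linarith)
    have B : (1/2:ℝ)*((1-y)/2) ≤ q*(q-y) := by
      rw [g4]; exact mul_le_mul_of_nonneg_right g3 (by linarith)
    have C : ((1-x)*(x/2))*((1/2:ℝ)*((1-y)/2)) ≤ ((1-p)*(x-p))*(q*(q-y)) :=
      mul_le_mul A B (by nlinarith) (by nlinarith)
    have hb2 : K ≤ (1-p)*(x-p)*(q*(q-y)) := by
      rw [hK]; nlinarith [C]
    rw [hWr]; linarith
  have hE1 : Wp*((1-p)*(p-x)) + Wr*((1-r)*(r-x)) + Wq*((1-q)*(q-x)) = 0 := by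
    rw [hWp, hWr, hWq]; ring
  have hE2 : Wp*(p*(p-y)) + Wr*(r*(r-y)) + Wq*(q*(q-y)) = 0 := by
    rw [hWp, hWr, hWq]; ring
  have dp := Dexpr_nonneg hp0 (by linarith) hx0 hx1 hy0 hy1 ha0' ha1' hb0' hb1'
    (hle p ⟨hp0.le, by linarith⟩)
  have dr := Dexpr_nonneg (by linarith : 0 < r) (by linarith : r < 1) hx0 hx1 hy0 hy1
    ha0' ha1' hb0' hb1' (hle r ⟨by linarith, by linarith⟩)
  have dq := Dexpr_nonneg (by linarith : 0 < q) hq1 hx0 hx1 hy0 hy1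
    ha0' ha1' hb0' hb1' (hle q ⟨by linarith, by linarith⟩)
  have comb : Wp * Dexpr x y a b p + Wr * Dexpr x y a b r + Wq * Dexpr x y a b q
      = (Wp*(1-p)+Wr*(1-r)+Wq*(1-q)) *
          (x*(Real.log a - Real.log x)+(1-x)*(Real.log (1-a)-Real.log (1-x)))
      + (Wp*p+Wr*r+Wq*q) *
          (y*(Real.log b - Real.log y)+(1-y)*(Real.log (1-b)-Real.log (1-y))) := by
    unfold Dexpr
    linear_combination (Real.log a - Real.log x - (Real.log (1-a) - Real.log (1-x)))*hE1
      + (Real.log b - Real.log y - (Real.log (1-b) - Real.log (1-y)))*hE2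
  have hA : 0 < Wp*(1-p)+Wr*(1-r)+Wq*(1-q) :=
    add_pos (add_pos (mul_pos hWp0 f9) (mul_pos hWr0 f5)) (mul_pos hWq0 f1)
  have hB : 0 < Wp*p+Wr*r+Wq*q :=
    add_pos (add_pos (mul_pos hWp0 hp0) (mul_pos hWr0 f3)) (mul_pos hWq0 f7)
  have hbr1 := bracket_le hx0 hx1 ha0' ha1'
  have hbr2 := bracket_le hy0 hy1 hb0' hb1'
  have hsum : 0 ≤ Wp * Dexpr x y a b p + Wr * Dexpr x y a b r + Wq * Dexpr x y a b q :=
    add_nonneg (add_nonneg (mul_nonneg hWp0.le dp) (mul_nonneg hWr0.le dr))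
      (mul_nonneg hWq0.le dq)
  rw [comb] at hsum
  have hm1 := mul_nonpos_of_nonneg_of_nonpos hA.le hbr1
  have hm2 := mul_nonpos_of_nonneg_of_nonpos hB.le hbr2
  have hz1 : (Wp*(1-p)+Wr*(1-r)+Wq*(1-q)) *
      (x*(Real.log a - Real.log x)+(1-x)*(Real.log (1-a)-Real.log (1-x))) = 0 := by
    linarith
  have hz2 : (Wp*p+Wr*r+Wq*q) *
      (y*(Real.log b - Real.log y)+(1-y)*(Real.log (1-b)-Real.log (1-y))) = 0 := by
    linarith
  have hbz1 : x*(Real.log a - Real.log x)+(1-x)*(Real.log (1-a)-Real.log (1-x)) = 0 := by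
    rcases mul_eq_zero.mp hz1 with hc | hc
    · exact absurd hc hA.ne'
    · exact hc
  have hbz2 : y*(Real.log b - Real.log y)+(1-y)*(Real.log (1-b)-Real.log (1-y)) = 0 := by
    rcases mul_eq_zero.mp hz2 with hc | hc
    · exact absurd hc hB.ne'
    · exact hc
  have hax : a = x := bracket_eq_zero hx0 hx1 ha0' ha1' hbz1
  have hby : b = y := bracket_eq_zero hy0 hy1 hb0' hb1' hbz2
  subst hax; subst hby
  exact lt_irrefl _ hlt

lemma classA_sub : classA ⊆ Decisions := by
  rintro ⟨x, y⟩ ((⟨h1, h2, h3⟩ | ⟨h1, h2, h3⟩) | h)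
  · exact ⟨⟨le_of_lt h1, by simp at h2 h3 ⊢; linarith⟩, ⟨by simp at h1 h2 ⊢; linarith, le_of_lt h3⟩⟩
  · exact ⟨⟨le_of_lt h1, by simp at h2 h3 ⊢; linarith⟩, ⟨by simp at h1 h2 ⊢; linarith, le_of_lt h3⟩⟩
  · rw [Set.mem_singleton_iff] at h
    rw [h]
    exact ⟨⟨le_refl 0, zero_le_one⟩, ⟨zero_le_one, le_refl 1⟩⟩

lemma classA_adm : ∀ δ ∈ classA, Admissible δ := by
  rintro ⟨x, y⟩ ((⟨h1, h2, h3⟩ | ⟨h1, h2, h3⟩) | h)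
  · exact adm_lt h1 h2 h3
  · simp only at h1 h2 h3
    rw [show ((x,y) : ℝ × ℝ) = (x, x) by rw [h2]]
    exact adm_diag h1 (h2 ▸ h3)
  · rw [Set.mem_singleton_iff] at h
    rw [h]
    exact adm_01

lemma classA_complete : ∀ δ ∈ Decisions \ classA, ∃ δ' ∈ classA, Dominates δ' δ := by
  rintro ⟨x, y⟩ ⟨⟨⟨hx0, hx1⟩, ⟨hy0, hy1⟩⟩, hnot⟩
  dsimp only at hx0 hx1 hy0 hy1
  simp only [classA, Set.mem_union, Set.mem_setOf_eq, Set.mem_singleton_iff,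
    Prod.mk.injEq, not_or] at hnot
  obtain ⟨⟨hn1, hn2⟩, hn3⟩ := hnot
  push_neg at hn1 hn2 hn3
  by_cases hyx : y < x
  · -- dominated by the constant rule (m, m)
    set m : ℝ := x/(1+x-y) with hm
    have hden : 0 < 1 + x - y := by linarith
    have hx0' : 0 < x := lt_of_le_of_lt hy0 hyx
    have hm0 : 0 < m := div_pos hx0' hden
    have hm1 : m < 1 := by rw [hm, div_lt_one hden]; linarith
    refine ⟨(m, m), Or.inl (Or.inr ⟨hm0, rfl, hm1⟩), ?_⟩
    exact dom_caseA hy0 hyx hx1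
  · push_neg at hyx
    rcases eq_or_lt_of_le hx0 with hx | hx
    · -- x = 0, then y < 1
      have hyne : y ≠ 1 := hn3 hx.symm
      have hy1' : y < 1 := lt_of_le_of_ne hy1 hyne
      subst hx
      exact ⟨((0:ℝ), (1:ℝ)), Or.inr rfl, dom_B hy0 hy1'⟩
    · -- 0 < x, then y = 1
      have hy1' : y = 1 := by
        by_contra hne
        have hy1'' : y < 1 := lt_of_le_of_ne hy1 hne
        rcases eq_or_lt_of_le hyx with he | hlt
        · exact absurd (hn2 hx he) (not_le.mpr hy1'')
        · exact absurd (hn1 hx hlt) (not_le.mpr hy1'')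
      refine ⟨((0:ℝ), (1:ℝ)), Or.inr rfl, ?_⟩
      rw [hy1']
      exact dom_C hx hx1


/-- `𝒜` is exactly the class of admissible decisions, it is a complete class, and
no proper subclass of it is complete: `𝒜` is the minimal complete class. -/
theorem minimal_complete_class :
    (∀ δ ∈ Decisions, Admissible δ ↔ δ ∈ classA) ∧
    CompleteClass classA ∧
    (∀ C : Set (ℝ × ℝ), C ⊂ classA → ¬ CompleteClass C) := by
  have hcomp : CompleteClass classA := ⟨classA_sub, classA_complete⟩
  refine ⟨?_, hcomp, ?_⟩
  · intro δ hδ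
    constructor
    · intro hA
      by_contra hnot
      obtain ⟨δ', hδ', hdom⟩ := hcomp.2 δ ⟨hδ, hnot⟩
      exact hA δ' (classA_sub hδ') hdom
    · intro h
      exact classA_adm δ h
  · intro C hC hCc
    obtain ⟨δ, hδA, hδC⟩ := Set.exists_of_ssubset hC
    obtain ⟨δ', hδ'C, hdom⟩ := hCc.2 δ ⟨classA_sub hδA, hδC⟩
    exact classA_adm δ hδA δ' (hCc.1 hδ'C) hdom
end

section
/- Let (δ₀,δ₁) ∈ (0,1)² with δ₀ + δ₁ ≠ 1, and define the symmetrized decision δ_s = ((δ₀ + 1 − δ₁)/2, (δ₁ + 1 − δ₀)/2). Then sup_{θ ∈ [0,1]} R_{δ_s}(θ) < sup_{θ ∈ [0,1]} R_{(δ₀,δ₁)}(θ). -/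
/-- The Kullback–Leibler loss `L(θ,d) = θ·log(θ/d) + (1−θ)·log((1−θ)/(1−d))` for
`d ∈ (0,1)`, with the convention `0 · log 0 = 0` (which holds automatically in Lean
since `Real.log 0 = 0`). -/
noncomputable def KLossR (θ d : ℝ) : ℝ :=
  θ * Real.log (θ / d) + (1 - θ) * Real.log ((1 - θ) / (1 - d))

/-- The risk function `R_δ(θ) = (1−θ)·L(θ,δ₀) + θ·L(θ,δ₁)` of a decision
`δ = (δ₀, δ₁) ∈ (0,1)²`. -/
noncomputable def riskR (δ : ℝ × ℝ) (θ : ℝ) : ℝ :=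
  (1 - θ) * KLossR θ δ.1 + θ * KLossR θ δ.2

private noncomputable def entR (θ : ℝ) : ℝ := θ * Real.log θ + (1 - θ) * Real.log (1 - θ)

private noncomputable def fR (θ d : ℝ) : ℝ := -(θ * Real.log d) - (1 - θ) * Real.log (1 - d)

private lemma mul_log_div (x d : ℝ) (hd : d ≠ 0) :
    x * Real.log (x / d) = x * Real.log x - x * Real.log d := by
  by_cases hx : x = 0
  · simp [hx]
  · rw [Real.log_div hx hd]; ring

private lemma KLossR_eq (θ d : ℝ) (hd : d ≠ 0) (hd' : (1 : ℝ) - d ≠ 0) :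
    KLossR θ d = entR θ + fR θ d := by
  unfold KLossR entR fR
  rw [mul_log_div θ d hd, mul_log_div (1 - θ) (1 - d) hd']
  ring

private lemma riskR_eq (δ : ℝ × ℝ) (hd1 : δ.1 ≠ 0) (hd1' : (1 : ℝ) - δ.1 ≠ 0)
    (hd2 : δ.2 ≠ 0) (hd2' : (1 : ℝ) - δ.2 ≠ 0) (θ : ℝ) :
    riskR δ θ = entR θ + ((1 - θ) * fR θ δ.1 + θ * fR θ δ.2) := by
  unfold riskR
  rw [KLossR_eq θ δ.1 hd1 hd1', KLossR_eq θ δ.2 hd2 hd2']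
  ring

private lemma riskR_cont (δ : ℝ × ℝ) (hd1 : δ.1 ≠ 0) (hd1' : (1 : ℝ) - δ.1 ≠ 0)
    (hd2 : δ.2 ≠ 0) (hd2' : (1 : ℝ) - δ.2 ≠ 0) : Continuous (riskR δ) := by
  have h : riskR δ = fun θ => entR θ + ((1 - θ) * fR θ δ.1 + θ * fR θ δ.2) :=
    funext (riskR_eq δ hd1 hd1' hd2 hd2')
  rw [h]
  have hml := Real.continuous_mul_log
  have hent : Continuous entR := by
    unfold entR
    exact hml.add (hml.comp (continuous_const.sub continuous_id))
  apply hent.add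
  unfold fR
  continuity

private lemma log_amgm {a b : ℝ} (ha : 0 < a) (hb : 0 < b) (hab : a ≠ b) :
    Real.log a + Real.log b < 2 * Real.log ((a + b) / 2) := by
  have hab2 : a * b < ((a + b) / 2) ^ 2 := by
    have hz : a - b ≠ 0 := sub_ne_zero.mpr hab
    have h : (a - b) ^ 2 > 0 := by positivity
    nlinarith
  have h1 : Real.log a + Real.log b = Real.log (a * b) := (Real.log_mul ha.ne' hb.ne').symm
  have h2 : Real.sqrt (a * b) < (a + b) / 2 := by
    rw [show (a + b) / 2 = Real.sqrt (((a + b) / 2) ^ 2) from (Real.sqrt_sq (by positivity)).symm]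
    exact Real.sqrt_lt_sqrt (by positivity) hab2
  have h3 : Real.log (Real.sqrt (a * b)) < Real.log ((a + b) / 2) :=
    Real.log_lt_log (Real.sqrt_pos.2 (by positivity)) h2
  rw [Real.log_sqrt (by positivity)] at h3
  linarith [h1]


/-- Symmetrization strictly lowers the worst-case risk: for `(δ₀,δ₁) ∈ (0,1)²` with
`δ₀ + δ₁ ≠ 1`, the symmetrized decision `δ_s = ((δ₀+1−δ₁)/2, (δ₁+1−δ₀)/2)` satisfies
`sup_{θ∈[0,1]} R_{δ_s}(θ) < sup_{θ∈[0,1]} R_{(δ₀,δ₁)}(θ)`. -/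
theorem symmetrization_lowers_worst_case (δ₀ δ₁ : ℝ)
    (h0 : δ₀ ∈ Set.Ioo (0 : ℝ) 1) (h1 : δ₁ ∈ Set.Ioo (0 : ℝ) 1)
    (hne : δ₀ + δ₁ ≠ 1) :
    sSup (riskR ((δ₀ + 1 - δ₁) / 2, (δ₁ + 1 - δ₀) / 2) '' Set.Icc (0 : ℝ) 1) <
      sSup (riskR (δ₀, δ₁) '' Set.Icc (0 : ℝ) 1) := by
  obtain ⟨h00, h01⟩ := h0
  obtain ⟨h10, h11⟩ := h1
  set m₀ : ℝ := (δ₀ + 1 - δ₁) / 2 with hm₀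
  set m₁ : ℝ := (δ₁ + 1 - δ₀) / 2 with hm₁
  have hm00 : 0 < m₀ := by rw [hm₀]; linarith
  have hm01 : m₀ < 1 := by rw [hm₀]; linarith
  have hm10 : 0 < m₁ := by rw [hm₁]; linarith
  have hm11 : m₁ < 1 := by rw [hm₁]; linarith
  have hconts : Continuous (riskR (m₀, m₁)) :=
    riskR_cont _ hm00.ne' (sub_ne_zero.mpr hm01.ne') hm10.ne' (sub_ne_zero.mpr hm11.ne')
  have hcont : Continuous (riskR (δ₀, δ₁)) :=
    riskR_cont _ h00.ne' (sub_ne_zero.mpr h01.ne') h10.ne' (sub_ne_zero.mpr h11.ne')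
  have hK : IsCompact (Set.Icc (0:ℝ) 1) := isCompact_Icc
  have hNe : (Set.Icc (0:ℝ) 1).Nonempty := ⟨0, by constructor <;> norm_num⟩
  obtain ⟨θ, hθmem, hθeq⟩ := hK.exists_sSup_image_eq hNe hconts.continuousOn
  obtain ⟨hθ0, hθ1⟩ := hθmem
  have hbdd : BddAbove (riskR (δ₀, δ₁) '' Set.Icc (0:ℝ) 1) :=
    hK.bddAbove_image hcont.continuousOn
  have hle1 : riskR (δ₀, δ₁) θ ≤ sSup (riskR (δ₀, δ₁) '' Set.Icc (0:ℝ) 1) :=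
    le_csSup hbdd ⟨θ, ⟨hθ0, hθ1⟩, rfl⟩
  have hle2 : riskR (δ₀, δ₁) (1 - θ) ≤ sSup (riskR (δ₀, δ₁) '' Set.Icc (0:ℝ) 1) :=
    le_csSup hbdd ⟨1 - θ, ⟨by linarith, by linarith⟩, rfl⟩
  -- key pointwise strict inequality
  have key : riskR (m₀, m₁) θ <
      (riskR (δ₀, δ₁) θ + riskR (δ₀, δ₁) (1 - θ)) / 2 := by
    have hP : Real.log δ₀ + Real.log (1 - δ₁) < 2 * Real.log m₀ := by
      rw [hm₀, show (δ₀ + 1 - δ₁) / 2 = (δ₀ + (1 - δ₁)) / 2 by ring]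
      exact log_amgm h00 (by linarith) (by intro h; apply hne; linarith)
    have hQ : Real.log δ₁ + Real.log (1 - δ₀) < 2 * Real.log m₁ := by
      rw [hm₁, show (δ₁ + 1 - δ₀) / 2 = (δ₁ + (1 - δ₀)) / 2 by ring]
      exact log_amgm h10 (by linarith) (by intro h; apply hne; linarith)
    rw [riskR_eq _ hm00.ne' (sub_ne_zero.mpr hm01.ne') hm10.ne' (sub_ne_zero.mpr hm11.ne'),
        riskR_eq _ h00.ne' (sub_ne_zero.mpr h01.ne') h10.ne' (sub_ne_zero.mpr h11.ne'),
        riskR_eq _ h00.ne' (sub_ne_zero.mpr h01.ne') h10.ne' (sub_ne_zero.mpr h11.ne')]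
    simp only [entR, fR]
    rw [show (1:ℝ) - (1 - θ) = θ by ring,
        show (1:ℝ) - m₀ = m₁ by rw [hm₀, hm₁]; ring,
        show (1:ℝ) - m₁ = m₀ by rw [hm₀, hm₁]; ring]
    have h2 : (0:ℝ) < θ ^ 2 + (1 - θ) ^ 2 := by nlinarith
    nlinarith [mul_nonneg (mul_nonneg hθ0 (by linarith : (0:ℝ) ≤ 1 - θ))
        (by linarith : (0:ℝ) ≤ 2 * Real.log m₀ - Real.log δ₀ - Real.log (1 - δ₁)),
      mul_pos h2 (by linarith : (0:ℝ) < 2 * Real.log m₁ - Real.log δ₁ - Real.log (1 - δ₀))]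
  rw [hθeq]
  linarith
end

section
/- Let 0 < a ≤ 1/3 and set δ₀ = a/(2a+1), δ₁ = (a+1)/(2a+1). Then sup_{θ ∈ [0,1]} R_{(δ₀,δ₁)}(θ) = (1/2)·log((a+1)/(4a)) + log((2a+1)/(a+1)). -/
open Real Set

noncomputable def Dfun (u : ℝ) : ℝ := (1+u)/2 * Real.log (1+u) + (1-u)/2 * Real.log (1-u)
noncomputable def Afun (u : ℝ) : ℝ := (Real.log (1+u) - Real.log (1-u))/2

lemma Afun_zero : Afun 0 = 0 := by simp [Afun]
lemma Dfun_zero : Dfun 0 = 0 := by simp [Dfun]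
lemma Dfun_one : Dfun 1 = Real.log 2 := by norm_num [Dfun]

lemma hasDerivAt_log_add {u : ℝ} (h : 0 < 1 + u) :
    HasDerivAt (fun x : ℝ => Real.log (1+x)) (1/(1+u)) u := by
  have h1 : HasDerivAt (fun x : ℝ => 1 + x) 1 u := (hasDerivAt_id u).const_add 1
  simpa [one_div, Function.comp_def] using (Real.hasDerivAt_log h.ne').comp u h1

lemma hasDerivAt_log_sub {u : ℝ} (h : 0 < 1 - u) :
    HasDerivAt (fun x : ℝ => Real.log (1-x)) (-(1/(1-u))) u := by
  have h1 : HasDerivAt (fun x : ℝ => 1 - x) (-1) u := (hasDerivAt_id u).const_sub 1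
  have := (Real.hasDerivAt_log h.ne').comp u h1
  simpa [one_div, Function.comp_def] using this

lemma hasDerivAt_Afun {u : ℝ} (h1 : -1 < u) (h2 : u < 1) :
    HasDerivAt Afun (1/(1-u^2)) u := by
  have ha : (0:ℝ) < 1 + u := by linarith
  have hb : (0:ℝ) < 1 - u := by linarith
  have := ((hasDerivAt_log_add ha).sub (hasDerivAt_log_sub hb)).div_const 2
  refine this.congr_deriv ?_
  have ha' : (1:ℝ) + u ≠ 0 := ha.ne'
  have hb' : (1:ℝ) - u ≠ 0 := hb.ne'
  have h2' : (1:ℝ) - u^2 ≠ 0 := by nlinarith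
  field_simp
  ring

lemma hasDerivAt_Dfun {u : ℝ} (h1 : -1 < u) (h2 : u < 1) :
    HasDerivAt Dfun (Afun u) u := by
  have ha : (0:ℝ) < 1 + u := by linarith
  have hb : (0:ℝ) < 1 - u := by linarith
  have d1 : HasDerivAt (fun x : ℝ => (1+x)/2 * Real.log (1+x))
      (1/2 * Real.log (1+u) + (1+u)/2 * (1/(1+u))) u := by
    have := (((hasDerivAt_id u).const_add 1).div_const 2).mul (hasDerivAt_log_add ha)
    simpa [Pi.mul_def] using this
  have d2 : HasDerivAt (fun x : ℝ => (1-x)/2 * Real.log (1-x))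
      ((-1)/2 * Real.log (1-u) + (1-u)/2 * (-(1/(1-u)))) u := by
    have := (((hasDerivAt_id u).const_sub 1).div_const 2).mul (hasDerivAt_log_sub hb)
    simpa [Pi.mul_def] using this
  have := d1.add d2
  refine this.congr_deriv ?_
  have ha' : (1:ℝ) + u ≠ 0 := ha.ne'
  have hb' : (1:ℝ) - u ≠ 0 := hb.ne'
  unfold Afun
  field_simp
  ring

lemma Afun_nonneg {u : ℝ} (h0 : 0 ≤ u) (h1 : u < 1) : 0 ≤ Afun u := by
  have : Real.log (1-u) ≤ Real.log (1+u) :=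
    Real.log_le_log (by linarith) (by linarith)
  unfold Afun; linarith

lemma key1_s13 {u : ℝ} (h0 : 0 ≤ u) (h1 : u < 1) : (1-u^2) * Afun u ≤ u := by
  have hd : ∀ x : ℝ, -1 < x → x < 1 →
      HasDerivAt (fun y : ℝ => y - (1-y^2) * Afun y) (2 * x * Afun x) x := by
    intro x hx1 hx2
    have h2 : (0:ℝ) < 1 - x^2 := by nlinarith
    have dq : HasDerivAt (fun y : ℝ => 1 - y^2) (-(2 * x^1)) x := by
      have := (hasDerivAt_pow 2 x).const_sub 1
      simpa using this
    have := (hasDerivAt_id x).sub (dq.mul (hasDerivAt_Afun hx1 hx2))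
    refine this.congr_deriv ?_
    have h2' : (1:ℝ) - x^2 ≠ 0 := h2.ne'
    field_simp
    ring
  have mono : MonotoneOn (fun y : ℝ => y - (1-y^2) * Afun y) (Ico 0 1) := by
    apply monotoneOn_of_hasDerivWithinAt_nonneg (convex_Ico 0 1)
      (f' := fun x => 2 * x * Afun x)
    · intro x hx
      exact (hd x (by linarith [hx.1]) hx.2).continuousAt.continuousWithinAt
    · intro x hx
      rw [interior_Ico] at hx
      exact (hd x (by linarith [hx.1]) hx.2).hasDerivWithinAt
    · intro x hx
      rw [interior_Ico] at hx
      have hA := Afun_nonneg hx.1.le hx.2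
      exact mul_nonneg (mul_nonneg (by norm_num) hx.1.le) hA
  have h := mono (by constructor <;> norm_num) ⟨h0, h1⟩ h0
  simpa [Afun_zero, sub_nonneg] using h

lemma key2_s13 {u : ℝ} (h0 : 0 ≤ u) (h1 : u < 1) : 2 * Dfun u ≤ u * Afun u := by
  have hd : ∀ x : ℝ, 0 ≤ x → x < 1 →
      HasDerivAt (fun y : ℝ => y * Afun y - 2 * Dfun y) (x/(1-x^2) - Afun x) x := by
    intro x hx1 hx2
    have h2 : (0:ℝ) < 1 - x^2 := by nlinarith
    have := ((hasDerivAt_id x).mul (hasDerivAt_Afun (by linarith) hx2)).sub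
      ((hasDerivAt_Dfun (by linarith) hx2).const_mul 2)
    refine this.congr_deriv ?_
    have h2' : (1:ℝ) - x^2 ≠ 0 := h2.ne'
    simp only [id_eq]
    field_simp
    ring
  have mono : MonotoneOn (fun y : ℝ => y * Afun y - 2 * Dfun y) (Ico 0 1) := by
    apply monotoneOn_of_hasDerivWithinAt_nonneg (convex_Ico 0 1)
      (f' := fun x => x/(1-x^2) - Afun x)
    · intro x hx
      exact (hd x hx.1 hx.2).continuousAt.continuousWithinAt
    · intro x hx
      rw [interior_Ico] at hx
      exact (hd x hx.1.le hx.2).hasDerivWithinAt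
    · intro x hx
      rw [interior_Ico] at hx
      have h2 : (0:ℝ) < 1 - x^2 := by nlinarith [hx.1, hx.2]
      have hk := key1_s13 hx.1.le hx.2
      rw [sub_nonneg, le_div_iff₀ h2]
      linarith [hk]
  have h := mono (by constructor <;> norm_num) ⟨h0, h1⟩ h0
  simpa [Afun_zero, Dfun_zero, sub_nonneg] using h

lemma continuousOn_Dfun : ContinuousOn Dfun (Icc 0 1) := by
  have heq : ∀ u ∈ Icc (0:ℝ) 1,
      ((1+u)/2 * Real.log (1+u) - Real.negMulLog (1-u) / 2) = Dfun u := by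
    intro u _
    simp only [Dfun, Real.negMulLog]
    ring
  apply ContinuousOn.congr _ (fun u hu => (heq u hu).symm)
  apply ContinuousOn.sub
  · apply ContinuousOn.mul (by fun_prop)
    apply ContinuousOn.log (by fun_prop)
    intro x hx
    have := hx.1
    intro h; linarith [this]
  · exact ((Real.continuous_negMulLog.comp (continuous_const.sub continuous_id)).continuousOn).div_const 2

lemma keyD {u : ℝ} (h0 : 0 ≤ u) (h1 : u ≤ 1) : Dfun u ≤ Real.log 2 * u^2 := by
  rcases eq_or_lt_of_le h0 with rfl | h0'
  · simp [Dfun_zero]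
  have mono : MonotoneOn (fun y : ℝ => Dfun y / y^2) (Ioc 0 1) := by
    apply monotoneOn_of_hasDerivWithinAt_nonneg (convex_Ioc 0 1)
      (f' := fun x => (x * Afun x - 2 * Dfun x)/x^3)
    · apply ContinuousOn.div (continuousOn_Dfun.mono Ioc_subset_Icc_self) (by fun_prop)
      intro x hx
      exact pow_ne_zero 2 (ne_of_gt hx.1)
    · intro x hx
      rw [interior_Ioc] at hx
      have hx0 : x ≠ 0 := ne_of_gt hx.1
      have := (hasDerivAt_Dfun (by linarith [hx.1]) hx.2).div (hasDerivAt_pow 2 x)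
        (pow_ne_zero 2 hx0)
      apply HasDerivAt.hasDerivWithinAt
      refine this.congr_deriv ?_
      field_simp
      ring
    · intro x hx
      rw [interior_Ioc] at hx
      have := key2_s13 hx.1.le hx.2
      have h3 : (0:ℝ) < x^3 := pow_pos hx.1 3
      apply div_nonneg (by linarith) h3.le
  have h : Dfun u / u^2 ≤ Dfun 1 / 1^2 :=
    mono ⟨h0', h1⟩ (by constructor <;> norm_num) h1
  rw [Dfun_one] at h
  norm_num at h
  calc Dfun u = (Dfun u / u^2) * u^2 := by field_simp
  _ ≤ Real.log 2 * u^2 := mul_le_mul_of_nonneg_right h (sq_nonneg u)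

lemma entropy_ineq_half {θ : ℝ} (h0 : 1/2 ≤ θ) (h1 : θ ≤ 1) :
    θ * Real.log θ + (1-θ) * Real.log (1-θ) + Real.log 2 ≤ Real.log 2 * (2*θ-1)^2 := by
  have hu0 : (0:ℝ) ≤ 2*θ-1 := by linarith
  have hu1 : 2*θ-1 ≤ 1 := by linarith
  have hD := keyD hu0 hu1
  have hθ : (0:ℝ) < θ := by linarith
  have hDeq : Dfun (2*θ-1) = θ * Real.log θ + (1-θ) * Real.log (1-θ) + Real.log 2 := by
    unfold Dfun
    rw [show (1:ℝ) + (2*θ-1) = 2*θ by ring, show (1:ℝ) - (2*θ-1) = 2*(1-θ) by ring,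
        Real.log_mul two_ne_zero hθ.ne']
    rcases eq_or_lt_of_le h1 with rfl | h1'
    · norm_num
    · rw [Real.log_mul two_ne_zero (by linarith : (1:ℝ)-θ ≠ 0)]
      ring
  rw [hDeq] at hD
  exact hD

lemma entropy_ineq {θ : ℝ} (h0 : 0 ≤ θ) (h1 : θ ≤ 1) :
    θ * Real.log θ + (1-θ) * Real.log (1-θ) + Real.log 2 ≤ Real.log 2 * (2*θ-1)^2 := by
  rcases le_total (1/2) θ with h | h
  · exact entropy_ineq_half h h1
  · have h2 := entropy_ineq_half (θ := 1-θ) (by linarith) (by linarith)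
    rw [show (1:ℝ) - (1-θ) = θ by ring,
        show (2*(1-θ)-1)^2 = (2*θ-1)^2 by ring] at h2
    linarith

/-- For `0 < a ≤ 1/3`, the worst-case risk of the Beta(a,a)-Bayes decision
`(a/(2a+1), (a+1)/(2a+1))` equals `(1/2)·log((a+1)/(4a)) + log((2a+1)/(a+1))`. -/
theorem worst_case_risk_small_a (a : ℝ) (ha0 : 0 < a) (ha : a ≤ 1 / 3) :
    sSup (riskR (a / (2 * a + 1), (a + 1) / (2 * a + 1)) '' Set.Icc (0 : ℝ) 1) =
      1 / 2 * Real.log ((a + 1) / (4 * a)) + Real.log ((2 * a + 1) / (a + 1)) := by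
  have h2a1 : (0:ℝ) < 2*a+1 := by linarith
  have ha1 : (0:ℝ) < a + 1 := by linarith
  set p := a / (2*a+1) with hp
  set q := (a+1) / (2*a+1) with hq
  have hp0 : 0 < p := div_pos ha0 h2a1
  have hq0 : 0 < q := div_pos ha1 h2a1
  have h1p : 1 - p = q := by rw [hp, hq]; field_simp; ring
  have h1q : 1 - q = p := by rw [hp, hq]; field_simp; ring
  have hlp : Real.log p = Real.log a - Real.log (2*a+1) := Real.log_div ha0.ne' h2a1.ne'
  have hlq : Real.log q = Real.log (a+1) - Real.log (2*a+1) := Real.log_div ha1.ne' h2a1.ne'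
  have hV : 1/2 * Real.log ((a+1)/(4*a)) + Real.log ((2*a+1)/(a+1))
      = -(1/2) * Real.log a - (1/2) * Real.log (a+1) + Real.log (2*a+1) - Real.log 2 := by
    rw [Real.log_div ha1.ne' (by positivity), Real.log_div h2a1.ne' ha1.ne',
        Real.log_mul (by norm_num : (4:ℝ) ≠ 0) ha0.ne',
        show (4:ℝ) = 2^2 by norm_num, Real.log_pow]
    push_cast; ring
  have hc : 2 * Real.log 2 ≤ Real.log (a+1) - Real.log a := by
    have h4 : (4:ℝ) ≤ (a+1)/a := by rw [le_div_iff₀ ha0]; linarith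
    have h5 := Real.log_le_log (by norm_num : (0:ℝ) < 4) h4
    rw [Real.log_div ha1.ne' ha0.ne', show (4:ℝ) = 2^2 by norm_num, Real.log_pow] at h5
    push_cast at h5; linarith
  have hform : ∀ θ : ℝ, 0 < θ → θ < 1 →
      riskR (p, q) θ = θ * Real.log θ + (1-θ) * Real.log (1-θ)
        - 2*θ*(1-θ) * Real.log p - (1 - 2*θ*(1-θ)) * Real.log q := by
    intro θ hθ0 hθ1
    have h1θ : (0:ℝ) < 1 - θ := by linarith
    simp only [riskR, KLossR]
    rw [h1p, h1q]
    rw [Real.log_div hθ0.ne' hp0.ne', Real.log_div h1θ.ne' hq0.ne',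
        Real.log_div hθ0.ne' hq0.ne', Real.log_div h1θ.ne' hp0.ne']
    ring
  have hval : riskR (p, q) (1/2)
      = 1/2 * Real.log ((a+1)/(4*a)) + Real.log ((2*a+1)/(a+1)) := by
    rw [hform (1/2) (by norm_num) (by norm_num), hV, hlp, hlq]
    norm_num
    rw [show Real.log (1/2) = -Real.log 2 by rw [one_div, Real.log_inv]]
    ring
  have hub : ∀ θ ∈ Set.Icc (0:ℝ) 1, riskR (p,q) θ
      ≤ 1/2 * Real.log ((a+1)/(4*a)) + Real.log ((2*a+1)/(a+1)) := by
    rintro θ ⟨hθ0, hθ1⟩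
    rw [hV]
    rcases eq_or_lt_of_le hθ0 with rfl | hθ0'
    · have e0 : riskR (p,q) 0 = - Real.log q := by
        simp [riskR, KLossR, h1p, one_div, Real.log_inv]
      rw [e0, hlq]
      linarith
    rcases eq_or_lt_of_le hθ1 with rfl | hθ1'
    · have e1 : riskR (p,q) 1 = - Real.log q := by
        simp [riskR, KLossR, one_div, Real.log_inv]
      rw [e1, hlq]
      linarith
    · rw [hform θ hθ0' hθ1', hlp, hlq]
      have h1 := entropy_ineq hθ0 hθ1
      have h2 : Real.log 2 * (2*θ-1)^2 ≤ ((Real.log (a+1) - Real.log a)/2) * (2*θ-1)^2 :=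
        mul_le_mul_of_nonneg_right (by linarith) (sq_nonneg _)
      have key : ((Real.log (a+1) - Real.log a)/2) * (2*θ-1)^2 - Real.log 2
          - 2*θ*(1-θ)*(Real.log a - Real.log (2*a+1))
          - (1-2*θ*(1-θ))*(Real.log (a+1) - Real.log (2*a+1))
          = -(1/2)*Real.log a - (1/2)*Real.log (a+1) + Real.log (2*a+1) - Real.log 2 := by
        ring
      linarith
  apply IsGreatest.csSup_eq
  constructor
  · exact ⟨1/2, ⟨by norm_num, by norm_num⟩, hval⟩
  · rintro x ⟨θ, hθ, rfl⟩
    exact hub θ hθ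
end

section
/- Let π be a Borel probability measure on [0,1] satisfying ∫ θ dπ(θ) = 1/2 and ∫ θ² dπ(θ) = 2/5, and suppose π minimizes ∫ S(θ) dπ(θ) among all Borel probability measures on [0,1] satisfying these two moment conditions. Then π is a discrete measure whose support contains at most four points. -/
open MeasureTheory

/-- The binary entropy function `S(θ) = −θ log θ − (1−θ) log(1−θ)`
(with the convention `0 · log 0 = 0`, which holds automatically since `Real.log 0 = 0`). -/
noncomputable def binEnt (θ : ℝ) : ℝ := -θ * Real.log θ - (1 - θ) * Real.log (1 - θ)

namespace LIP

noncomputable def fE (θ : ℝ) : ℝ := binEnt θ - 4 * Real.log 2 * (θ - θ ^ 2)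

noncomputable def fE' (θ : ℝ) : ℝ :=
  Real.log (1 - θ) - Real.log θ - 4 * Real.log 2 * (1 - 2 * θ)

lemma binEnt_eq (θ : ℝ) : binEnt θ = Real.negMulLog θ + Real.negMulLog (1 - θ) := by
  simp only [binEnt, Real.negMulLog]; ring

lemma continuous_binEnt : Continuous binEnt := by
  have : binEnt = fun θ => Real.negMulLog θ + Real.negMulLog (1 - θ) := funext binEnt_eq
  rw [this]
  exact Real.continuous_negMulLog.add
    (Real.continuous_negMulLog.comp (continuous_const.sub continuous_id))

lemma continuous_fE : Continuous fE :=
  continuous_binEnt.sub (continuous_const.mul (continuous_id.sub (continuous_pow 2)))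

lemma binEnt_zero : binEnt 0 = 0 := by simp [binEnt]
lemma binEnt_one : binEnt 1 = 0 := by simp [binEnt]

lemma binEnt_half : binEnt (1/2) = Real.log 2 := by
  unfold binEnt
  rw [show (1:ℝ) - 1/2 = 1/2 by norm_num, show (1/2:ℝ) = 2⁻¹ by norm_num, Real.log_inv]
  ring

lemma fE_zero : fE 0 = 0 := by simp [fE, binEnt_zero]
lemma fE_one : fE 1 = 0 := by simp [fE, binEnt_one]
lemma fE_half : fE (1/2) = 0 := by
  unfold fE; rw [binEnt_half]; ring

lemma fE_symm (θ : ℝ) : fE (1 - θ) = fE θ := by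
  unfold fE binEnt
  rw [show (1:ℝ) - (1 - θ) = θ by ring]
  ring

lemma hasDerivAt_binEnt {θ : ℝ} (h0 : θ ≠ 0) (h1 : θ ≠ 1) :
    HasDerivAt binEnt (Real.log (1 - θ) - Real.log θ) θ := by
  have h1' : (1:ℝ) - θ ≠ 0 := sub_ne_zero.mpr (Ne.symm h1)
  have ha := Real.hasDerivAt_negMulLog h0
  have hinner : HasDerivAt (fun x : ℝ => 1 - x) (-1) θ := by
    simpa using (hasDerivAt_id θ).const_sub 1
  have hb : HasDerivAt (fun x : ℝ => Real.negMulLog (1 - x))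
      ((-Real.log (1 - θ) - 1) * (-1)) θ :=
    (Real.hasDerivAt_negMulLog h1').comp θ hinner
  have hsum := ha.add hb
  have heq : binEnt = fun θ => Real.negMulLog θ + Real.negMulLog (1 - θ) := funext binEnt_eq
  rw [heq]
  refine hsum.congr_deriv ?_
  ring

lemma hasDerivAt_fE {θ : ℝ} (h0 : θ ≠ 0) (h1 : θ ≠ 1) :
    HasDerivAt fE (fE' θ) θ := by
  have hp : HasDerivAt (fun x : ℝ => 4 * Real.log 2 * (x - x ^ 2))
      (4 * Real.log 2 * (1 - 2 * θ)) θ := by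
    have := ((hasDerivAt_id θ).sub (hasDerivAt_pow 2 θ)).const_mul (4 * Real.log 2)
    refine this.congr_deriv ?_
    push_cast
    ring
  exact (hasDerivAt_binEnt h0 h1).sub hp

lemma hasDerivAt_fE' {θ : ℝ} (h0 : θ ≠ 0) (h1 : θ ≠ 1) :
    HasDerivAt fE' (8 * Real.log 2 - 1/θ - 1/(1 - θ)) θ := by
  have h1' : (1:ℝ) - θ ≠ 0 := sub_ne_zero.mpr (Ne.symm h1)
  have hinner : HasDerivAt (fun x : ℝ => 1 - x) (-1) θ := by
    simpa using (hasDerivAt_id θ).const_sub 1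
  have hl1 : HasDerivAt (fun x : ℝ => Real.log (1 - x)) ((1 - θ)⁻¹ * (-1)) θ :=
    (Real.hasDerivAt_log h1').comp θ hinner
  have hl2 : HasDerivAt Real.log θ⁻¹ θ := Real.hasDerivAt_log h0
  have hp : HasDerivAt (fun x : ℝ => 4 * Real.log 2 * (1 - 2 * x))
      (4 * Real.log 2 * (-(2 * 1))) θ :=
    (((hasDerivAt_id θ).const_mul (2:ℝ)).const_sub (1:ℝ)).const_mul (4 * Real.log 2)
  have := (hl1.sub hl2).sub hp
  refine this.congr_deriv ?_
  field_simp
  ring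


noncomputable def rr : ℝ := Real.sqrt (1 - 1/(2*Real.log 2))
noncomputable def aa : ℝ := (1 - rr)/2

lemma hL : (1:ℝ)/2 < Real.log 2 := by
  have := Real.log_two_gt_d9; linarith

lemma harg_pos : 0 < 1 - 1/(2*Real.log 2) := by
  have h := hL
  have h2 : (0:ℝ) < 2*Real.log 2 := by linarith
  have : 1/(2*Real.log 2) < 1 := by rw [div_lt_one h2]; linarith
  linarith

lemma rr_sq : rr^2 = 1 - 1/(2*Real.log 2) := Real.sq_sqrt harg_pos.le

lemma rr_pos : 0 < rr := Real.sqrt_pos.mpr harg_pos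

lemma rr_lt_one : rr < 1 := by
  have h1 : 0 < 1/(2*Real.log 2) := by positivity
  nlinarith [rr_sq, rr_pos]

lemma h2Lr : 2*Real.log 2*rr^2 = 2*Real.log 2 - 1 := by
  rw [rr_sq]
  have h2 : (2*Real.log 2) ≠ 0 := by have := hL; positivity
  field_simp

lemma aa_pos : 0 < aa := by unfold aa; linarith [rr_lt_one]
lemma aa_lt_half : aa < 1/2 := by unfold aa; linarith [rr_pos]

lemma deriv2_pos {θ : ℝ} (h1 : aa < θ) (h2 : θ ≤ 1/2) :
    0 < 8*Real.log 2 - 1/θ - 1/(1-θ) := by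
  have hθ0 : 0 < θ := lt_trans aa_pos h1
  have hθ1 : θ < 1 := by linarith
  have hd : 1/2 - θ < rr/2 := by unfold aa at h1; linarith
  have hd0 : 0 ≤ 1/2 - θ := by linarith
  have hsq : (1/2 - θ)^2 < rr^2/4 := by nlinarith
  have hLpos : (0:ℝ) < Real.log 2 := by linarith [hL]
  have key : 0 < Real.log 2 * (rr^2/4 - (1/2-θ)^2) := mul_pos hLpos (by linarith)
  have hprod : 1 < 8*Real.log 2*(θ*(1-θ)) := by nlinarith [h2Lr]
  have ht : 0 < θ*(1-θ) := mul_pos hθ0 (by linarith)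
  have hsum : 1/θ + 1/(1-θ) = 1/(θ*(1-θ)) := by
    rw [div_add_div _ _ (ne_of_gt (by linarith : (0:ℝ) < θ)) (ne_of_gt (by linarith : (0:ℝ) < 1-θ))]; norm_num
  have hlt : 1/(θ*(1-θ)) < 8*Real.log 2 := (div_lt_iff₀ ht).mpr (by linarith)
  linarith [hsum, hlt]

lemma deriv2_neg {θ : ℝ} (h1 : 0 < θ) (h2 : θ < aa) :
    8*Real.log 2 - 1/θ - 1/(1-θ) < 0 := by
  have hθ1 : θ < 1 := by linarith [aa_lt_half]
  have hd : rr/2 < 1/2 - θ := by unfold aa at h2; linarith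
  have hd0 : 0 ≤ rr/2 := by linarith [rr_pos]
  have hsq : rr^2/4 < (1/2 - θ)^2 := by nlinarith
  have hLpos : (0:ℝ) < Real.log 2 := by linarith [hL]
  have key : 0 < Real.log 2 * ((1/2-θ)^2 - rr^2/4) := mul_pos hLpos (by linarith)
  have hprod : 8*Real.log 2*(θ*(1-θ)) < 1 := by nlinarith [h2Lr]
  have ht : 0 < θ*(1-θ) := mul_pos h1 (by linarith)
  have hsum : 1/θ + 1/(1-θ) = 1/(θ*(1-θ)) := by
    rw [div_add_div _ _ (ne_of_gt (by linarith : (0:ℝ) < θ)) (ne_of_gt (by linarith : (0:ℝ) < 1-θ))]; norm_num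
  have hlt : 8*Real.log 2 < 1/(θ*(1-θ)) := (lt_div_iff₀ ht).mpr (by linarith)
  linarith [hsum, hlt]

lemma fE'_half : fE' (1/2) = 0 := by
  unfold fE'
  norm_num

lemma continuousOn_fE' : ContinuousOn fE' (Set.Icc aa (1/2)) := by
  intro x hx
  have hx0 : (0:ℝ) < x := lt_of_lt_of_le aa_pos hx.1
  have hx1 : x < 1 := by have := hx.2; linarith
  apply ContinuousAt.continuousWithinAt
  unfold fE'
  have hc1 : ContinuousAt (fun y : ℝ => Real.log (1 - y)) x :=
    (Real.continuousAt_log (by linarith : (1:ℝ) - x ≠ 0)).comp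
      ((continuous_const.sub continuous_id).continuousAt)
  have hc2 : ContinuousAt Real.log x := Real.continuousAt_log (ne_of_gt hx0)
  exact (hc1.sub hc2).sub
    ((continuous_const.mul (continuous_const.sub (continuous_const.mul continuous_id))).continuousAt)

lemma fE'_strictMono : StrictMonoOn fE' (Set.Icc aa (1/2)) := by
  apply strictMonoOn_of_deriv_pos (convex_Icc _ _) continuousOn_fE'
  intro x hx
  rw [interior_Icc] at hx
  have hx0 : (0:ℝ) < x := lt_trans aa_pos hx.1
  have hx1 : x < 1 := by have := hx.2; linarith
  rw [(hasDerivAt_fE' (ne_of_gt hx0) (ne_of_lt hx1)).deriv]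
  exact deriv2_pos hx.1 hx.2.le

lemma fE'_neg {x : ℝ} (h1 : aa ≤ x) (h2 : x < 1/2) : fE' x < 0 := by
  have := fE'_strictMono ⟨h1, h2.le⟩ ⟨aa_lt_half.le, le_refl _⟩ h2
  rw [fE'_half] at this
  exact this

lemma fE_strictAnti : StrictAntiOn fE (Set.Icc aa (1/2)) := by
  apply strictAntiOn_of_deriv_neg (convex_Icc _ _) continuous_fE.continuousOn
  intro x hx
  rw [interior_Icc] at hx
  have hx0 : (0:ℝ) < x := lt_trans aa_pos hx.1
  have hx1 : x < 1 := by have := hx.2; linarith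
  rw [(hasDerivAt_fE (ne_of_gt hx0) (ne_of_lt hx1)).deriv]
  exact fE'_neg hx.1.le hx.2

lemma fE_pos_upper {θ : ℝ} (h1 : aa ≤ θ) (h2 : θ < 1/2) : 0 < fE θ := by
  have := fE_strictAnti ⟨h1, h2.le⟩ ⟨aa_lt_half.le, le_refl _⟩ h2
  rw [fE_half] at this
  exact this

lemma fE_strictConcave : StrictConcaveOn ℝ (Set.Icc 0 aa) fE := by
  apply strictConcaveOn_of_deriv2_neg (convex_Icc _ _) continuous_fE.continuousOn
  intro x hx
  rw [interior_Icc] at hx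
  have hx0 : (0:ℝ) < x := hx.1
  have hxa : x < aa := hx.2
  have hx1 : x < 1 := by linarith [aa_lt_half]
  have hev : deriv fE =ᶠ[nhds x] fE' := by
    filter_upwards [Ioo_mem_nhds hx0 hx1] with y hy
    exact (hasDerivAt_fE (ne_of_gt hy.1) (ne_of_lt hy.2)).deriv
  have h2 : deriv^[2] fE x = deriv (deriv fE) x := rfl
  rw [h2, hev.deriv_eq, (hasDerivAt_fE' (ne_of_gt hx0) (ne_of_lt hx1)).deriv]
  exact deriv2_neg hx0 hxa

lemma fE_pos_lower {θ : ℝ} (h1 : 0 < θ) (h2 : θ < aa) : 0 < fE θ := by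
  have haa : (0:ℝ) < aa := aa_pos
  have hfa : 0 < fE aa := fE_pos_upper (le_refl _) aa_lt_half
  have hb : 0 < θ/aa := div_pos h1 haa
  have ha' : 0 < 1 - θ/aa := by
    have : θ/aa < 1 := (div_lt_one haa).mpr h2
    linarith
  have := fE_strictConcave.2 (Set.left_mem_Icc.mpr haa.le)
    (Set.right_mem_Icc.mpr haa.le) (ne_of_lt haa) ha' hb (by ring)
  have hco : (1 - θ/aa) • (0:ℝ) + (θ/aa) • aa = θ := by
    rw [smul_eq_mul, smul_eq_mul, mul_zero, zero_add, div_mul_cancel₀ _ (ne_of_gt haa)]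
  rw [hco, fE_zero] at this
  have : (θ/aa) * fE aa < fE θ := by
    rw [smul_eq_mul, smul_eq_mul, mul_zero, zero_add] at this
    exact this
  nlinarith [mul_pos hb hfa]

lemma fE_pos {θ : ℝ} (h0 : 0 < θ) (h1 : θ < 1) (hne : θ ≠ 1/2) : 0 < fE θ := by
  rcases lt_trichotomy θ (1/2) with h | h | h
  · rcases le_or_gt aa θ with h' | h'
    · exact fE_pos_upper h' h
    · exact fE_pos_lower h0 h'
  · exact absurd h hne
  · rw [← fE_symm θ]
    rcases le_or_gt aa (1-θ) with h' | h'
    · exact fE_pos_upper h' (by linarith)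
    · exact fE_pos_lower (by linarith) h'

lemma fE_nonneg {θ : ℝ} (hθ : θ ∈ Set.Icc (0:ℝ) 1) : 0 ≤ fE θ := by
  rcases eq_or_lt_of_le hθ.1 with h0 | h0
  · rw [← h0, fE_zero]
  rcases eq_or_lt_of_le hθ.2 with h1 | h1
  · rw [h1, fE_one]
  by_cases hne : θ = 1/2
  · rw [hne, fE_half]
  · exact (fE_pos h0 h1 hne).le

lemma fE_zero_imp {θ : ℝ} (hθ : θ ∈ Set.Icc (0:ℝ) 1) (h : fE θ = 0) :
    θ = 0 ∨ θ = 1/2 ∨ θ = 1 := by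
  by_contra hc
  push_neg at hc
  obtain ⟨h0, hhalf, h1⟩ := hc
  have hlt0 : 0 < θ := lt_of_le_of_ne hθ.1 (Ne.symm h0)
  have hlt1 : θ < 1 := lt_of_le_of_ne hθ.2 h1
  exact absurd h (ne_of_gt (fE_pos hlt0 hlt1 hhalf))

noncomputable def π₃ : Measure ℝ :=
  ENNReal.ofReal (3/10) • Measure.dirac (0:ℝ) +
    (ENNReal.ofReal (2/5) • Measure.dirac (1/2:ℝ) + ENNReal.ofReal (3/10) • Measure.dirac (1:ℝ))

lemma π₃_prob : IsProbabilityMeasure π₃ := by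
  constructor
  unfold π₃
  simp only [Measure.add_apply, Measure.smul_apply, smul_eq_mul, measure_univ, mul_one]
  rw [← ENNReal.ofReal_add (by norm_num) (by norm_num),
      ← ENNReal.ofReal_add (by norm_num) (by norm_num)]
  norm_num

lemma π₃_supp : π₃ (Set.Icc (0:ℝ) 1)ᶜ = 0 := by
  unfold π₃
  simp only [Measure.add_apply, Measure.smul_apply, smul_eq_mul]
  rw [Measure.dirac_apply' _ measurableSet_Icc.compl,
      Measure.dirac_apply' _ measurableSet_Icc.compl,
      Measure.dirac_apply' _ measurableSet_Icc.compl]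
  rw [Set.indicator_of_notMem (by simp : (0:ℝ) ∉ (Set.Icc (0:ℝ) 1)ᶜ),
      Set.indicator_of_notMem (by norm_num : (1/2:ℝ) ∉ (Set.Icc (0:ℝ) 1)ᶜ),
      Set.indicator_of_notMem (by norm_num : (1:ℝ) ∉ (Set.Icc (0:ℝ) 1)ᶜ)]
  simp

lemma integrable_dirac' {f : ℝ → ℝ} (hf : Continuous f) (a : ℝ) :
    Integrable f (Measure.dirac a) := by
  refine ⟨hf.aestronglyMeasurable, ?_⟩
  rw [HasFiniteIntegral, lintegral_dirac]
  exact ENNReal.coe_lt_top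

lemma π₃_integral (f : ℝ → ℝ) (hf : Continuous f) :
    ∫ θ, f θ ∂π₃ = (3/10) * f 0 + ((2/5) * f (1/2) + (3/10) * f 1) := by
  have i0 := (integrable_dirac' hf 0).smul_measure (c := ENNReal.ofReal (3/10)) ENNReal.ofReal_ne_top
  have i1 := (integrable_dirac' hf (1/2)).smul_measure (c := ENNReal.ofReal (2/5)) ENNReal.ofReal_ne_top
  have i2 := (integrable_dirac' hf 1).smul_measure (c := ENNReal.ofReal (3/10)) ENNReal.ofReal_ne_top
  unfold π₃
  rw [integral_add_measure i0 (i1.add_measure i2), integral_add_measure i1 i2,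
      integral_smul_measure, integral_smul_measure, integral_smul_measure,
      integral_dirac, integral_dirac, integral_dirac,
      ENNReal.toReal_ofReal (by norm_num : (0:ℝ) ≤ 3/10),
      ENNReal.toReal_ofReal (by norm_num : (0:ℝ) ≤ 2/5)]
  simp [smul_eq_mul]

lemma negMulLog_le_one {x : ℝ} (h0 : 0 ≤ x) (h1 : x ≤ 1) : Real.negMulLog x ≤ 1 := by
  rcases eq_or_lt_of_le h0 with h | h
  · rw [← h, Real.negMulLog_zero]; norm_num
  · have hinv : 0 < x⁻¹ := inv_pos.mpr h
    have hlog : Real.log x⁻¹ ≤ x⁻¹ - 1 := Real.log_le_sub_one_of_pos hinv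
    have : Real.negMulLog x = x * Real.log x⁻¹ := by
      rw [Real.log_inv, Real.negMulLog]; ring
    rw [this]
    calc x * Real.log x⁻¹ ≤ x * (x⁻¹ - 1) := by
          apply mul_le_mul_of_nonneg_left hlog h0
      _ = 1 - x := by field_simp
      _ ≤ 1 := by linarith

lemma binEnt_bound {θ : ℝ} (hθ : θ ∈ Set.Icc (0:ℝ) 1) : ‖binEnt θ‖ ≤ 2 := by
  have h0 := hθ.1
  have h1 := hθ.2
  have h0' : (0:ℝ) ≤ 1 - θ := by linarith
  have h1' : (1:ℝ) - θ ≤ 1 := by linarith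
  rw [binEnt_eq, Real.norm_eq_abs, abs_le]
  constructor
  · have := Real.negMulLog_nonneg h0 h1
    have := Real.negMulLog_nonneg h0' h1'
    linarith
  · have := negMulLog_le_one h0 h1
    have := negMulLog_le_one h0' h1'
    linarith

end LIP




/-- If a Borel probability measure `π` on `[0,1]` with `∫θdπ = 1/2` and `∫θ²dπ = 2/5`
minimizes `∫ S dπ` among all Borel probability measures on `[0,1]` satisfying these two
moment conditions, then `π` is a discrete measure supported on at most four points. -/
theorem latent_information_prior_finite_support (π : Measure ℝ) [IsProbabilityMeasure π]
    (hsupp : π (Set.Icc (0 : ℝ) 1)ᶜ = 0)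
    (hm1 : (∫ θ, θ ∂π) = 1 / 2) (hm2 : (∫ θ, θ ^ 2 ∂π) = 2 / 5)
    (hmin : ∀ π' : Measure ℝ, IsProbabilityMeasure π' →
      π' (Set.Icc (0 : ℝ) 1)ᶜ = 0 →
      (∫ θ, θ ∂π') = 1 / 2 → (∫ θ, θ ^ 2 ∂π') = 2 / 5 →
      (∫ θ, binEnt θ ∂π) ≤ ∫ θ, binEnt θ ∂π') :
    ∃ s : Finset ℝ, s.card ≤ 4 ∧ π (↑s : Set ℝ)ᶜ = 0 := by
  classical
  have haeIcc : ∀ᵐ θ ∂π, θ ∈ Set.Icc (0:ℝ) 1 := by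
    rw [ae_iff]
    exact hsupp
  -- integrability
  have int_id : Integrable (fun θ : ℝ => θ) π := by
    refine ⟨measurable_id.aestronglyMeasurable, ?_⟩
    apply HasFiniteIntegral.of_bounded (C := 1)
    filter_upwards [haeIcc] with θ hθ
    rw [Real.norm_eq_abs, abs_le]
    exact ⟨by linarith [hθ.1], hθ.2⟩
  have int_sq : Integrable (fun θ : ℝ => θ ^ 2) π := by
    refine ⟨(measurable_id.pow_const 2).aestronglyMeasurable, ?_⟩
    apply HasFiniteIntegral.of_bounded (C := 1)
    filter_upwards [haeIcc] with θ hθ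
    rw [Real.norm_eq_abs, abs_le]
    constructor <;> nlinarith [hθ.1, hθ.2]
  have int_ent : Integrable binEnt π := by
    refine ⟨LIP.continuous_binEnt.aestronglyMeasurable, ?_⟩
    apply HasFiniteIntegral.of_bounded (C := 2)
    filter_upwards [haeIcc] with θ hθ
    exact LIP.binEnt_bound hθ
  -- apply minimality against the 3-point measure
  have hm1' : (∫ θ, θ ∂LIP.π₃) = 1 / 2 := by
    rw [LIP.π₃_integral (fun θ => θ) continuous_id]; norm_num
  have hm2' : (∫ θ, θ ^ 2 ∂LIP.π₃) = 2 / 5 := by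
    rw [LIP.π₃_integral (fun θ => θ ^ 2) (continuous_pow 2)]; norm_num
  have hle : (∫ θ, binEnt θ ∂π) ≤ 2/5 * Real.log 2 := by
    have := hmin LIP.π₃ LIP.π₃_prob LIP.π₃_supp hm1' hm2'
    rw [LIP.π₃_integral _ LIP.continuous_binEnt, LIP.binEnt_zero, LIP.binEnt_one,
      LIP.binEnt_half] at this
    linarith [this]
  -- integral of fE is zero
  have int_poly : Integrable (fun θ : ℝ => θ - θ ^ 2) π := int_id.sub int_sq
  have int_fE : Integrable LIP.fE π := by
    have : LIP.fE = fun θ => binEnt θ - 4 * Real.log 2 * (θ - θ ^ 2) := rfl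
    rw [this]
    exact int_ent.sub (int_poly.const_mul _)
  have hintfE : ∫ θ, LIP.fE θ ∂π ≤ 0 := by
    have heq : ∫ θ, LIP.fE θ ∂π
        = (∫ θ, binEnt θ ∂π) - 4 * Real.log 2 * ∫ θ, (θ - θ ^ 2) ∂π := by
      rw [show (fun θ => LIP.fE θ) = fun θ => binEnt θ - 4 * Real.log 2 * (θ - θ ^ 2) from rfl,
        integral_sub int_ent (int_poly.const_mul _), integral_const_mul]
    have hpoly : ∫ θ, (θ - θ ^ 2) ∂π = 1/10 := by
      rw [integral_sub int_id int_sq, hm1, hm2]; norm_num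
    rw [heq, hpoly]
    linarith [hle]
  have hnn : 0 ≤ᵐ[π] LIP.fE := by
    filter_upwards [haeIcc] with θ hθ using LIP.fE_nonneg hθ
  have hzero : ∫ θ, LIP.fE θ ∂π = 0 :=
    le_antisymm hintfE (integral_nonneg_of_ae hnn)
  have hae0 : LIP.fE =ᵐ[π] 0 := (integral_eq_zero_iff_of_nonneg_ae hnn int_fE).mp hzero
  refine ⟨{0, 1/2, 1}, ?_, ?_⟩
  · have h1 := Finset.card_insert_le (0:ℝ) {1/2, 1}
    have h2 := Finset.card_insert_le (1/2:ℝ) {1}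
    have h3 : ({1} : Finset ℝ).card = 1 := Finset.card_singleton 1
    omega
  · have hae : ∀ᵐ θ ∂π, θ ∈ (↑({0, 1/2, 1} : Finset ℝ) : Set ℝ) := by
      filter_upwards [haeIcc, hae0] with θ hθ h0
      have := LIP.fE_zero_imp hθ h0
      simp only [Finset.coe_insert, Finset.coe_singleton, Set.mem_insert_iff,
        Set.mem_singleton_iff]
      tauto
    rw [ae_iff] at hae
    exact hae
end
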